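/- arXiv:1906.12144 — 3 statements merged into one kernel-verified Lean document; each statement's English description precedes it below -/
import Mathlib

section
/- For the path graph P_n on n ≥ 4 vertices, the number of minimal vertex covers of P_n equals the number of minimal vertex covers of P_{n−2} plus the number of minimal vertex covers of P_{n−3}. Consequently, the sequence c_n of numbers of minimal vertex covers of paths satisfies the Padovan recurrence c_n = c_{n−2} + c_{n−3}. -/
open Finset

variable {V : Type} [Fintype V] [DecidableEq V]

/-- The closed neighborhood `N[v]` of a vertex, as a `Finset`. -/
def closedNbhd (G : SimpleGraph V) [DecidableRel G.Adj] (v : V) : Finset V :=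
  insert v (G.neighborFinset v)

/-- The graph `G \ A` obtained by deleting the vertices in `A` (keeping them as
isolated vertices on the same vertex set). -/
def deleteVerts (G : SimpleGraph V) (A : Finset V) : SimpleGraph V where
  Adj u v := G.Adj u v ∧ u ∉ A ∧ v ∉ A
  symm := ⟨fun u v h => ⟨h.1.symm, h.2.2, h.2.1⟩⟩
  loopless := ⟨fun u h => G.loopless.irrefl u h.1⟩

/-- `C` is a vertex cover of `G`. -/
def IsVertexCover (G : SimpleGraph V) (C : Finset V) : Prop :=
  ∀ ⦃u v : V⦄, G.Adj u v → u ∈ C ∨ v ∈ C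

/-- `C` is a minimal vertex cover of `G`. -/
def IsMinVertexCover (G : SimpleGraph V) (C : Finset V) : Prop :=
  IsVertexCover G C ∧ ∀ D : Finset V, D ⊂ C → ¬ IsVertexCover G D

/-- A graph is chordal if it has no induced cycle of length greater than `3`. -/
def IsChordal (G : SimpleGraph V) : Prop :=
  ∀ n : ℕ, 4 ≤ n → ∀ f : ZMod n → V, Function.Injective f →
    ¬ (∀ i j : ZMod n, G.Adj (f i) (f j) ↔ j = i + 1 ∨ i = j + 1)

/-- `S` is an independent set of `G`. -/
def IsIndepSet (G : SimpleGraph V) (S : Finset V) : Prop :=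
  ∀ ⦃u : V⦄, u ∈ S → ∀ ⦃v : V⦄, v ∈ S → ¬ G.Adj u v

/-- `S` is a maximal independent set of `G`. -/
def IsMaxIndepSet (G : SimpleGraph V) (S : Finset V) : Prop :=
  IsIndepSet G S ∧ ∀ T : Finset V, IsIndepSet G T → S ⊆ T → S = T

/-- `F` is a maximal clique of `G`, i.e. a facet of the clique complex `Δ(G)`. -/
def IsMaxCliqueF (G : SimpleGraph V) (F : Finset V) : Prop :=
  G.IsClique ↑F ∧ ∀ F' : Finset V, G.IsClique ↑F' → F ⊆ F' → F = F'

/-- `M` is an induced matching of `G`: a set of edges of `G` such that no edge of `G`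
joins a vertex of one member to a vertex of a different member. -/
def IsInducedMatching (G : SimpleGraph V) (M : Finset (Sym2 V)) : Prop :=
  (∀ e ∈ M, e ∈ G.edgeSet) ∧
    ∀ e ∈ M, ∀ f ∈ M, e ≠ f → ∀ u v : V, u ∈ e → v ∈ f → ¬ G.Adj u v

/-- The induced matching number `im(G)`. -/
noncomputable def inducedMatchingNumber (G : SimpleGraph V) : ℕ :=
  sSup {n | ∃ M : Finset (Sym2 V), IsInducedMatching G M ∧ M.card = n}

/-- The graph `G` has no edges. -/
def NoEdges (G : SimpleGraph V) : Prop := ∀ u v : V, ¬ G.Adj u v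

open MvPolynomial in
/-- The squarefree monomial `∏_{v ∈ C} x_v` associated to a set of vertices. -/
noncomputable def coverMonomial (K : Type) [Field K] (C : Finset V) : MvPolynomial V K :=
  ∏ v ∈ C, X v

open MvPolynomial in
/-- The cover ideal `J(G)`, generated by the monomials of the minimal vertex covers. -/
noncomputable def coverIdeal (K : Type) [Field K] (G : SimpleGraph V) : Ideal (MvPolynomial V K) :=
  Ideal.span {m | ∃ C : Finset V, IsMinVertexCover G C ∧ m = coverMonomial K C}

open MvPolynomial in
/-- The edge ideal `I(G)`. -/
noncomputable def edgeIdeal (K : Type) [Field K] (G : SimpleGraph V) : Ideal (MvPolynomial V K) :=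
  Ideal.span {m | ∃ u v : V, G.Adj u v ∧ m = X u * X v}

open MvPolynomial in
/-- `m` is a linear quotients ordering: each successive colon ideal
`(m_1, …, m_{i-1}) : m_i` is generated by a subset of the variables. -/
def IsLinQuotOrd {K : Type} [Field K] {ι : Type} [LinearOrder ι]
    (m : ι → MvPolynomial V K) : Prop :=
  ∀ i : ι, ∃ T : Set V,
    (Ideal.span (m '' {j | j < i})).colon (Ideal.span {m i}) =
      Ideal.span ((fun v => (X v : MvPolynomial V K)) '' T)


namespace Stmt13Aux

lemma minCover_iff (G : SimpleGraph V) (C : Finset V) :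
    IsMinVertexCover G C ↔
      IsVertexCover G C ∧ ∀ v ∈ C, ∃ u, G.Adj v u ∧ u ∉ C := by
  constructor
  · rintro ⟨hc, hmin⟩
    refine ⟨hc, fun v hv => ?_⟩
    have h := hmin (C.erase v) (Finset.erase_ssubset hv)
    simp only [IsVertexCover, not_forall] at h
    obtain ⟨u, w, hadj, huw⟩ := h
    push_neg at huw
    obtain ⟨hu, hw⟩ := huw
    rcases hc hadj with hu' | hw'
    · have : u = v := by
        by_contra hne
        exact hu (Finset.mem_erase.mpr ⟨hne, hu'⟩)
      subst this
      refine ⟨w, hadj, fun hwC => ?_⟩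
      have : w = u := by
        by_contra hne
        exact hw (Finset.mem_erase.mpr ⟨hne, hwC⟩)
      exact G.loopless.irrefl u (this ▸ hadj)
    · have : w = v := by
        by_contra hne
        exact hw (Finset.mem_erase.mpr ⟨hne, hw'⟩)
      subst this
      refine ⟨u, hadj.symm, fun huC => ?_⟩
      have : u = w := by
        by_contra hne
        exact hu (Finset.mem_erase.mpr ⟨hne, huC⟩)
      exact G.loopless.irrefl w (this ▸ hadj)
  · rintro ⟨hc, hpriv⟩
    refine ⟨hc, fun D hD hcov => ?_⟩
    obtain ⟨v, hvC, hvD⟩ := Finset.exists_of_ssubset hD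
    obtain ⟨u, hadj, huC⟩ := hpriv v hvC
    rcases hcov hadj with h | h
    · exact hvD h
    · exact huC (hD.subset h)

def pGood (k : ℕ) (S : Finset ℕ) : Prop :=
  S ⊆ Finset.range k ∧
  (∀ i : ℕ, i + 1 < k → i ∈ S ∨ i + 1 ∈ S) ∧
  (∀ i ∈ S, (∃ j, j + 1 = i ∧ j ∉ S) ∨ (i + 1 < k ∧ i + 1 ∉ S))

lemma minCover_iff_pGood (k : ℕ) (C : Finset (Fin k)) :
    IsMinVertexCover (SimpleGraph.pathGraph k) C ↔
      pGood k (C.map ⟨Fin.val, Fin.val_injective⟩) := by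
  rw [minCover_iff]
  set S := C.map ⟨Fin.val, Fin.val_injective⟩ with hSdef
  have hmem : ∀ (v : Fin k), (v : ℕ) ∈ S ↔ v ∈ C := by
    intro v; simp [hSdef, Fin.val_inj]
  have hmem' : ∀ (i : ℕ) (h : i < k), i ∈ S ↔ (⟨i, h⟩ : Fin k) ∈ C := by
    intro i h; exact hmem ⟨i, h⟩
  have hrange : S ⊆ Finset.range k := by
    intro x hx
    simp only [hSdef, Finset.mem_map] at hx
    obtain ⟨v, _, rfl⟩ := hx
    exact Finset.mem_range.mpr v.isLt
  constructor
  · rintro ⟨hc, hpriv⟩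
    refine ⟨hrange, ?_, ?_⟩
    · intro i hi
      have h1 : i < k := by omega
      have hadj : (SimpleGraph.pathGraph k).Adj ⟨i, h1⟩ ⟨i + 1, hi⟩ := by
        rw [SimpleGraph.pathGraph_adj]; left; rfl
      rcases hc hadj with h | h
      · exact Or.inl ((hmem' i h1).mpr h)
      · exact Or.inr ((hmem' (i+1) hi).mpr h)
    · intro i hiS
      have hik : i < k := Finset.mem_range.mp (hrange hiS)
      obtain ⟨u, hadj, huC⟩ := hpriv ⟨i, hik⟩ ((hmem' i hik).mp hiS)
      rw [SimpleGraph.pathGraph_adj] at hadj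
      rcases hadj with h | h
      · -- i + 1 = u
        right
        have : (i : ℕ) + 1 = (u : ℕ) := h
        refine ⟨by omega, fun hc => ?_⟩
        exact huC ((hmem u).mp (this ▸ hc))
      · -- u + 1 = i
        left
        refine ⟨(u : ℕ), h, fun hc => ?_⟩
        exact huC ((hmem u).mp hc)
  · rintro ⟨_, hcov, hmin⟩
    constructor
    · intro u v hadj
      rw [SimpleGraph.pathGraph_adj] at hadj
      rcases hadj with h | h
      · rcases hcov (u : ℕ) (by omega) with h' | h'
        · exact Or.inl ((hmem u).mp h')
        · right
          rw [h] at h'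
          exact (hmem v).mp h'
      · rcases hcov (v : ℕ) (by omega) with h' | h'
        · exact Or.inr ((hmem v).mp h')
        · left
          rw [h] at h'
          exact (hmem u).mp h'
    · intro v hvC
      rcases hmin (v : ℕ) ((hmem v).mpr hvC) with ⟨j, hj, hjS⟩ | ⟨hlt, hnS⟩
      · have hjk : j < k := by have := v.isLt; omega
        refine ⟨⟨j, hjk⟩, ?_, fun hc => hjS ((hmem' j hjk).mpr hc)⟩
        rw [SimpleGraph.pathGraph_adj]; right; exact hj
      · refine ⟨⟨(v : ℕ) + 1, hlt⟩, ?_, fun hc => hnS ((hmem' _ hlt).mpr hc)⟩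
        rw [SimpleGraph.pathGraph_adj]; left; rfl

lemma card_eq (k : ℕ) :
    Nat.card {C : Finset (Fin k) // IsMinVertexCover (SimpleGraph.pathGraph k) C} =
      Nat.card {S : Finset ℕ // pGood k S} := by
  apply Nat.card_congr
  refine Equiv.ofBijective
    (fun C => ⟨C.1.map ⟨Fin.val, Fin.val_injective⟩, (minCover_iff_pGood k C.1).mp C.2⟩)
    ⟨?_, ?_⟩
  · intro C D h
    exact Subtype.ext (Finset.map_injective _ (congrArg Subtype.val h))
  · rintro ⟨S, hS⟩
    have hlt : ∀ x ∈ S, x < k := fun x hx => Finset.mem_range.mp (hS.1 hx)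
    have hmapeq : (S.attachFin hlt).map ⟨Fin.val, Fin.val_injective⟩ = S := by
      ext x
      simp only [Finset.mem_map, Finset.mem_attachFin, Function.Embedding.coeFn_mk]
      constructor
      · rintro ⟨a, ha, rfl⟩; exact ha
      · intro hx; exact ⟨⟨x, hlt x hx⟩, hx, rfl⟩
    refine ⟨⟨S.attachFin hlt, ?_⟩, ?_⟩
    · rw [minCover_iff_pGood, hmapeq]; exact hS
    · exact Subtype.ext hmapeq

lemma pGood_insertA (m : ℕ) {S : Finset ℕ} (h : pGood (m+2) S) :
    pGood (m+4) (insert (m+2) S) := by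
  obtain ⟨hr, hcov, hmin⟩ := h
  have hS : ∀ x ∈ S, x < m + 2 := fun x hx => Finset.mem_range.mp (hr hx)
  refine ⟨?_, ?_, ?_⟩
  · intro x hx
    rcases Finset.mem_insert.mp hx with rfl | hx
    · exact Finset.mem_range.mpr (by omega)
    · exact Finset.mem_range.mpr (by have := hS x hx; omega)
  · intro i hi
    by_cases h1 : i + 1 < m + 2
    · rcases hcov i h1 with h | h
      · exact Or.inl (Finset.mem_insert_of_mem h)
      · exact Or.inr (Finset.mem_insert_of_mem h)
    · rcases (by omega : i + 1 = m + 2 ∨ i = m + 2) with h | h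
      · right; rw [h]; exact Finset.mem_insert_self _ _
      · left; rw [h]; exact Finset.mem_insert_self _ _
  · intro i hi
    rcases Finset.mem_insert.mp hi with rfl | hiS
    · right
      refine ⟨by omega, fun hc => ?_⟩
      rcases Finset.mem_insert.mp hc with h | h
      · omega
      · exact absurd (hS _ h) (by omega)
    · rcases hmin i hiS with ⟨j, hj, hjS⟩ | ⟨hlt, hnS⟩
      · left
        refine ⟨j, hj, fun hc => ?_⟩
        rcases Finset.mem_insert.mp hc with h | h
        · have := hS i hiS; omega
        · exact hjS h
      · right
        refine ⟨by omega, fun hc => ?_⟩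
        rcases Finset.mem_insert.mp hc with h | h
        · omega
        · exact hnS h

lemma pGood_insertB (m : ℕ) {S : Finset ℕ} (h : pGood (m+1) S) :
    pGood (m+4) (insert (m+3) (insert (m+1) S)) := by
  obtain ⟨hr, hcov, hmin⟩ := h
  have hS : ∀ x ∈ S, x < m + 1 := fun x hx => Finset.mem_range.mp (hr hx)
  have hmem : ∀ x, x ∈ insert (m+3) (insert (m+1) S) ↔ x = m+3 ∨ x = m+1 ∨ x ∈ S := by
    intro x; simp [Finset.mem_insert]
  refine ⟨?_, ?_, ?_⟩
  · intro x hx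
    rcases (hmem x).mp hx with rfl | rfl | hx
    · exact Finset.mem_range.mpr (by omega)
    · exact Finset.mem_range.mpr (by omega)
    · exact Finset.mem_range.mpr (by have := hS x hx; omega)
  · intro i hi
    by_cases h1 : i + 1 < m + 1
    · rcases hcov i h1 with h | h
      · exact Or.inl ((hmem i).mpr (Or.inr (Or.inr h)))
      · exact Or.inr ((hmem _).mpr (Or.inr (Or.inr h)))
    · rcases (by omega : i + 1 = m + 1 ∨ i = m + 1 ∨ i + 1 = m + 3 ∨ i = m + 3) with h | h | h | h
      · exact Or.inr ((hmem _).mpr (Or.inr (Or.inl h)))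
      · exact Or.inl ((hmem _).mpr (Or.inr (Or.inl h)))
      · exact Or.inr ((hmem _).mpr (Or.inl h))
      · exact Or.inl ((hmem _).mpr (Or.inl h))
  · intro i hi
    rcases (hmem i).mp hi with rfl | rfl | hiS
    · left
      refine ⟨m + 2, rfl, fun hc => ?_⟩
      rcases (hmem _).mp hc with h | h | h
      · omega
      · omega
      · exact absurd (hS _ h) (by omega)
    · right
      refine ⟨by omega, fun hc => ?_⟩
      rcases (hmem _).mp hc with h | h | h
      · omega
      · omega
      · exact absurd (hS _ h) (by omega)
    · have hik := hS i hiS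
      rcases hmin i hiS with ⟨j, hj, hjS⟩ | ⟨hlt, hnS⟩
      · left
        refine ⟨j, hj, fun hc => ?_⟩
        rcases (hmem _).mp hc with h | h | h
        · omega
        · omega
        · exact hjS h
      · right
        refine ⟨by omega, fun hc => ?_⟩
        rcases (hmem _).mp hc with h | h | h
        · omega
        · omega
        · exact hnS h

lemma surjA (m : ℕ) {S : Finset ℕ} (hS : pGood (m+4) S) (h3 : m+3 ∉ S) :
    pGood (m+2) (S.erase (m+2)) ∧ S = insert (m+2) (S.erase (m+2)) := by
  obtain ⟨hr, hcov, hmin⟩ := hS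
  have hS4 : ∀ x ∈ S, x < m + 4 := fun x hx => Finset.mem_range.mp (hr hx)
  have hm2 : m + 2 ∈ S := by
    rcases hcov (m+2) (by omega) with h | h
    · exact h
    · exact absurd h h3
  have hTmem : ∀ x, x ∈ S.erase (m+2) ↔ x ∈ S ∧ x ≠ m + 2 := by
    intro x; simp [Finset.mem_erase]; tauto
  constructor
  · refine ⟨?_, ?_, ?_⟩
    · intro x hx
      obtain ⟨hxS, hx2⟩ := (hTmem x).mp hx
      have := hS4 x hxS
      have hx3 : x ≠ m + 3 := fun e => h3 (e ▸ hxS)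
      exact Finset.mem_range.mpr (by omega)
    · intro i hi
      rcases hcov i (by omega) with h | h
      · exact Or.inl ((hTmem i).mpr ⟨h, by omega⟩)
      · exact Or.inr ((hTmem _).mpr ⟨h, by omega⟩)
    · intro i hiT
      obtain ⟨hiS, hi2⟩ := (hTmem i).mp hiT
      have hi3 : i ≠ m + 3 := fun e => h3 (e ▸ hiS)
      have hik : i < m + 2 := by have := hS4 i hiS; omega
      rcases hmin i hiS with ⟨j, hj, hjS⟩ | ⟨hlt, hnS⟩
      · exact Or.inl ⟨j, hj, fun hc => hjS ((hTmem j).mp hc).1⟩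
      · have : i + 1 ≠ m + 2 := fun e => hnS (e ▸ hm2)
        exact Or.inr ⟨by omega, fun hc => hnS ((hTmem _).mp hc).1⟩
  · ext x
    simp only [Finset.mem_insert, hTmem]
    constructor
    · intro hx
      by_cases e2 : x = m + 2
      · exact Or.inl e2
      · exact Or.inr ⟨hx, e2⟩
    · rintro (rfl | ⟨h, -⟩)
      · exact hm2
      · exact h

lemma surjB (m : ℕ) {S : Finset ℕ} (hS : pGood (m+4) S) (h3 : m+3 ∈ S) :
    pGood (m+1) ((S.erase (m+3)).erase (m+1)) ∧
      S = insert (m+3) (insert (m+1) ((S.erase (m+3)).erase (m+1))) := by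
  obtain ⟨hr, hcov, hmin⟩ := hS
  have hS4 : ∀ x ∈ S, x < m + 4 := fun x hx => Finset.mem_range.mp (hr hx)
  have hm2 : m + 2 ∉ S := by
    rcases hmin _ h3 with ⟨j, hj, hjS⟩ | ⟨hlt, _⟩
    · have : j = m + 2 := by omega
      exact this ▸ hjS
    · omega
  have hm1 : m + 1 ∈ S := by
    rcases hcov (m+1) (by omega) with h | h
    · exact h
    · exact absurd h hm2
  have hTmem : ∀ x, x ∈ (S.erase (m+3)).erase (m+1) ↔ x ∈ S ∧ x ≠ m + 1 ∧ x ≠ m + 3 := by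
    intro x; simp [Finset.mem_erase]; tauto
  constructor
  · refine ⟨?_, ?_, ?_⟩
    · intro x hx
      obtain ⟨hxS, hx1, hx3⟩ := (hTmem x).mp hx
      have := hS4 x hxS
      have hx2 : x ≠ m + 2 := fun e => hm2 (e ▸ hxS)
      exact Finset.mem_range.mpr (by omega)
    · intro i hi
      rcases hcov i (by omega) with h | h
      · exact Or.inl ((hTmem i).mpr ⟨h, by omega, by omega⟩)
      · exact Or.inr ((hTmem _).mpr ⟨h, by omega, by omega⟩)
    · intro i hiT
      obtain ⟨hiS, hi1, hi3⟩ := (hTmem i).mp hiT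
      have hi2 : i ≠ m + 2 := fun e => hm2 (e ▸ hiS)
      have hik : i < m + 1 := by have := hS4 i hiS; omega
      rcases hmin i hiS with ⟨j, hj, hjS⟩ | ⟨hlt, hnS⟩
      · exact Or.inl ⟨j, hj, fun hc => hjS ((hTmem j).mp hc).1⟩
      · have : i + 1 ≠ m + 1 := fun e => hnS (e ▸ hm1)
        exact Or.inr ⟨by omega, fun hc => hnS ((hTmem _).mp hc).1⟩
  · ext x
    simp only [Finset.mem_insert, hTmem]
    constructor
    · intro hx
      by_cases e3 : x = m + 3
      · exact Or.inl e3
      by_cases e1 : x = m + 1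
      · exact Or.inr (Or.inl e1)
      · exact Or.inr (Or.inr ⟨hx, e1, e3⟩)
    · rintro (rfl | rfl | ⟨h, -, -⟩)
      · exact h3
      · exact hm1
      · exact h

instance finite_pGood (k : ℕ) : Finite {S : Finset ℕ // pGood k S} := by
  apply Finite.of_injective
    (fun x : {S : Finset ℕ // pGood k S} =>
      (⟨x.1, Finset.mem_powerset.mpr x.2.1⟩ : {S : Finset ℕ // S ∈ (Finset.range k).powerset}))
  intro a b h
  exact Subtype.ext (by simpa [Subtype.ext_iff] using h)

lemma key (m : ℕ) :
    Nat.card {S : Finset ℕ // pGood (m+4) S} =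
      Nat.card {S : Finset ℕ // pGood (m+2) S} + Nat.card {S : Finset ℕ // pGood (m+1) S} := by
  rw [← Nat.card_sum]
  refine (Nat.card_congr (Equiv.ofBijective
    (fun x : {S : Finset ℕ // pGood (m+2) S} ⊕ {S : Finset ℕ // pGood (m+1) S} =>
      match x with
      | Sum.inl ⟨S, hS⟩ => (⟨insert (m+2) S, pGood_insertA m hS⟩ : {S : Finset ℕ // pGood (m+4) S})
      | Sum.inr ⟨S, hS⟩ => ⟨insert (m+3) (insert (m+1) S), pGood_insertB m hS⟩)
    ⟨?_, ?_⟩)).symm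
  · rintro (⟨S1, h1⟩ | ⟨S1, h1⟩) (⟨S2, h2⟩ | ⟨S2, h2⟩) h
    · have he : insert (m+2) S1 = insert (m+2) S2 := congrArg Subtype.val h
      have n1 : m + 2 ∉ S1 := fun hc => by have := Finset.mem_range.mp (h1.1 hc); omega
      have n2 : m + 2 ∉ S2 := fun hc => by have := Finset.mem_range.mp (h2.1 hc); omega
      have : S1 = S2 := by
        rw [← Finset.erase_insert n1, ← Finset.erase_insert n2, he]
      simp [this]
    · exfalso
      have he : insert (m+2) S1 = insert (m+3) (insert (m+1) S2) := congrArg Subtype.val h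
      have : m + 3 ∈ insert (m+2) S1 := he ▸ Finset.mem_insert_self _ _
      rcases Finset.mem_insert.mp this with hc | hc
      · omega
      · have := Finset.mem_range.mp (h1.1 hc); omega
    · exfalso
      have he : insert (m+3) (insert (m+1) S1) = insert (m+2) S2 := congrArg Subtype.val h
      have : m + 3 ∈ insert (m+2) S2 := he ▸ Finset.mem_insert_self _ _
      rcases Finset.mem_insert.mp this with hc | hc
      · omega
      · have := Finset.mem_range.mp (h2.1 hc); omega
    · have he : insert (m+3) (insert (m+1) S1) = insert (m+3) (insert (m+1) S2) :=
        congrArg Subtype.val h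
      have n1 : m + 3 ∉ insert (m+1) S1 := by
        intro hc
        rcases Finset.mem_insert.mp hc with hc | hc
        · omega
        · have := Finset.mem_range.mp (h1.1 hc); omega
      have n2 : m + 3 ∉ insert (m+1) S2 := by
        intro hc
        rcases Finset.mem_insert.mp hc with hc | hc
        · omega
        · have := Finset.mem_range.mp (h2.1 hc); omega
      have he2 : insert (m+1) S1 = insert (m+1) S2 := by
        rw [← Finset.erase_insert n1, ← Finset.erase_insert n2, he]
      have m1 : m + 1 ∉ S1 := fun hc => by have := Finset.mem_range.mp (h1.1 hc); omega
      have m2 : m + 1 ∉ S2 := fun hc => by have := Finset.mem_range.mp (h2.1 hc); omega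
      have : S1 = S2 := by
        rw [← Finset.erase_insert m1, ← Finset.erase_insert m2, he2]
      simp [this]
  · rintro ⟨S, hS⟩
    by_cases h3 : m + 3 ∈ S
    · obtain ⟨hT, heq⟩ := surjB m hS h3
      exact ⟨Sum.inr ⟨_, hT⟩, Subtype.ext heq.symm⟩
    · obtain ⟨hT, heq⟩ := surjA m hS h3
      exact ⟨Sum.inl ⟨_, hT⟩, Subtype.ext heq.symm⟩

end Stmt13Aux

/-- The numbers of minimal vertex covers of paths satisfy the Padovan recurrence. -/
theorem stmt_13 (n : ℕ) (hn : 4 ≤ n) :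
    Nat.card {C : Finset (Fin n) // IsMinVertexCover (SimpleGraph.pathGraph n) C} =
      Nat.card {C : Finset (Fin (n - 2)) //
        IsMinVertexCover (SimpleGraph.pathGraph (n - 2)) C} +
      Nat.card {C : Finset (Fin (n - 3)) //
        IsMinVertexCover (SimpleGraph.pathGraph (n - 3)) C} := by
  obtain ⟨m, rfl⟩ : ∃ m, n = m + 4 := ⟨n - 4, by omega⟩
  have h2 : m + 4 - 2 = m + 2 := by omega
  have h3 : m + 4 - 3 = m + 1 := by omega
  rw [h2, h3, Stmt13Aux.card_eq, Stmt13Aux.card_eq, Stmt13Aux.card_eq, Stmt13Aux.key m]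
end

section
/- Let G be a chordal graph with a simplicial vertex x_1 whose closed neighborhood is {x_1, …, x_r} with r ≥ 2, and let H_i = G \ N[x_i]. Then im(G) = max{ im(H_1), max{ im(H_i) + 1 : i = 2, …, r } }. -/
open Finset

variable {V : Type} [Fintype V] [DecidableEq V]

section Helpers

variable {G : SimpleGraph V}

lemma empty_isInducedMatching (G : SimpleGraph V) :
    IsInducedMatching G (∅ : Finset (Sym2 V)) :=
  ⟨fun e he => absurd he (Finset.notMem_empty e),
   fun e he => absurd he (Finset.notMem_empty e)⟩

lemma im_bddAbove (G : SimpleGraph V) :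
    BddAbove {n | ∃ M : Finset (Sym2 V), IsInducedMatching G M ∧ M.card = n} := by
  refine ⟨Fintype.card (Sym2 V), ?_⟩
  rintro n ⟨M, -, rfl⟩
  exact Finset.card_le_univ M

lemma im_spec (G : SimpleGraph V) :
    ∃ M : Finset (Sym2 V), IsInducedMatching G M ∧ M.card = inducedMatchingNumber G := by
  have hne : {n | ∃ M : Finset (Sym2 V), IsInducedMatching G M ∧ M.card = n}.Nonempty :=
    ⟨0, ∅, empty_isInducedMatching G, Finset.card_empty⟩
  obtain ⟨M, h1, h2⟩ := Nat.sSup_mem hne (im_bddAbove G)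
  exact ⟨M, h1, h2⟩

lemma card_le_im {M : Finset (Sym2 V)} (h : IsInducedMatching G M) :
    M.card ≤ inducedMatchingNumber G :=
  le_csSup (im_bddAbove G) ⟨M, h, rfl⟩

lemma delete_edge_mem {A : Finset V} {e : Sym2 V}
    (he : e ∈ (deleteVerts G A).edgeSet) : e ∈ G.edgeSet := by
  induction e using Sym2.ind with
  | _ a b =>
    rw [SimpleGraph.mem_edgeSet] at he ⊢
    exact he.1

lemma delete_vert_not_mem {A : Finset V} {e : Sym2 V}
    (he : e ∈ (deleteVerts G A).edgeSet) {u : V} (hu : u ∈ e) : u ∉ A := by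
  induction e using Sym2.ind with
  | _ a b =>
    rw [SimpleGraph.mem_edgeSet] at he
    rcases Sym2.mem_iff.mp hu with rfl | rfl
    · exact he.2.1
    · exact he.2.2

lemma delete_mem_edgeSet {A : Finset V} {e : Sym2 V} (he : e ∈ G.edgeSet)
    (h : ∀ u ∈ e, u ∉ A) : e ∈ (deleteVerts G A).edgeSet := by
  induction e using Sym2.ind with
  | _ a b =>
    rw [SimpleGraph.mem_edgeSet] at he ⊢
    exact ⟨he, h a (Sym2.mem_mk_left a b), h b (Sym2.mem_mk_right a b)⟩

lemma indMatching_of_delete {A : Finset V} {M : Finset (Sym2 V)}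
    (h : IsInducedMatching (deleteVerts G A) M) : IsInducedMatching G M := by
  refine ⟨fun e he => delete_edge_mem (h.1 e he), ?_⟩
  intro e he f hf hef u v hu hv hadj
  exact h.2 e he f hf hef u v hu hv
    ⟨hadj, delete_vert_not_mem (h.1 e he) hu, delete_vert_not_mem (h.1 f hf) hv⟩

lemma indMatching_to_delete {A : Finset V} {M : Finset (Sym2 V)}
    (h : IsInducedMatching G M) (hA : ∀ e ∈ M, ∀ u ∈ e, u ∉ A) :
    IsInducedMatching (deleteVerts G A) M := by
  refine ⟨fun e he => delete_mem_edgeSet (h.1 e he) (hA e he), ?_⟩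
  intro e he f hf hef u v hu hv hadj
  exact h.2 e he f hf hef u v hu hv hadj.1

lemma indMatching_subset {M N : Finset (Sym2 V)} (h : IsInducedMatching G M)
    (hNM : N ⊆ M) : IsInducedMatching G N :=
  ⟨fun e he => h.1 e (hNM he), fun e he f hf => h.2 e (hNM he) f (hNM hf)⟩

lemma im_delete_le (G : SimpleGraph V) (A : Finset V) :
    inducedMatchingNumber (deleteVerts G A) ≤ inducedMatchingNumber G := by
  obtain ⟨M, hM, hc⟩ := im_spec (deleteVerts G A)
  rw [← hc]
  exact card_le_im (indMatching_of_delete hM)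

end Helpers

/-- Recursion for the induced matching number of a chordal graph with a simplicial
vertex. -/
theorem stmt_17 {V : Type} [Fintype V] [DecidableEq V] (G : SimpleGraph V)
    [DecidableRel G.Adj] (hG : IsChordal G)
    (r : ℕ) (hr : 2 ≤ r) (x : Fin r → V) (hx : Function.Injective x)
    (hN : closedNbhd G (x ⟨0, by omega⟩) = Finset.image x Finset.univ)
    (hcl : G.IsClique ((closedNbhd G (x ⟨0, by omega⟩)) : Set V)) :
    inducedMatchingNumber G =
      max (inducedMatchingNumber (deleteVerts G (closedNbhd G (x ⟨0, by omega⟩))))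
        ((Finset.univ.erase (⟨0, by omega⟩ : Fin r)).sup
          (fun t => inducedMatchingNumber (deleteVerts G (closedNbhd G (x t))) + 1)) := by
  clear hG
  set x0 : Fin r := ⟨0, by omega⟩ with hx0def
  apply le_antisymm
  · -- ≤ : take a maximum induced matching M of G
    obtain ⟨M, hM, hc⟩ := im_spec G
    rw [← hc]
    by_cases h : ∃ e ∈ M, ∃ u ∈ e, u ∈ closedNbhd G (x x0)
    · obtain ⟨e, he, u, hue, huN⟩ := h
      have hedge := hM.1 e he
      obtain ⟨w, hew⟩ := Sym2.mem_iff_exists.mp hue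
      have hadj : G.Adj u w := by
        rw [hew, SimpleGraph.mem_edgeSet] at hedge; exact hedge
      rw [hN] at huN
      obtain ⟨j, -, hju⟩ := Finset.mem_image.mp huN
      -- find i ≠ x0 with x i ∈ e together with its partner in e
      have key : ∃ i : Fin r, i ≠ x0 ∧ ∃ y : V, e = s(x i, y) ∧ G.Adj (x i) y := by
        by_cases hj : j = x0
        · have hadj0w : G.Adj (x x0) w := by rwa [← hju, hj] at hadj
          have hwN : w ∈ closedNbhd G (x x0) :=
            Finset.mem_insert_of_mem ((G.mem_neighborFinset _ _).mpr hadj0w)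
          rw [hN] at hwN
          obtain ⟨k, -, hkw⟩ := Finset.mem_image.mp hwN
          have hk0 : k ≠ x0 := by
            rintro rfl
            have hwu : w = u := by rw [← hkw, ← hj, hju]
            exact G.loopless.irrefl u (hwu ▸ hadj)
          exact ⟨k, hk0, u, by rw [hew, hkw, Sym2.eq_swap], by rw [hkw]; exact hadj.symm⟩
        · exact ⟨j, hj, w, by rw [hew, hju], by rw [hju]; exact hadj⟩
      obtain ⟨i, hi0, y, hey, hadjy⟩ := key
      have hxie : x i ∈ e := by rw [hey]; exact Sym2.mem_mk_left _ _
      have hye : y ∈ e := by rw [hey]; exact Sym2.mem_mk_right _ _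
      -- M.erase e is an induced matching of G \ N[x i]
      have hMe : IsInducedMatching (deleteVerts G (closedNbhd G (x i))) (M.erase e) := by
        apply indMatching_to_delete (indMatching_subset hM (Finset.erase_subset e M))
        intro f hf v hv hvN
        have hfe : f ≠ e := Finset.ne_of_mem_erase hf
        rcases Finset.mem_insert.mp hvN with rfl | hvadj
        · exact hM.2 e he f (Finset.mem_of_mem_erase hf) (Ne.symm hfe) y (x i) hye hv
            hadjy.symm
        · exact hM.2 e he f (Finset.mem_of_mem_erase hf) (Ne.symm hfe) (x i) v hxie hv
            ((G.mem_neighborFinset _ _).mp hvadj)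
      calc M.card = (M.erase e).card + 1 := (Finset.card_erase_add_one he).symm
        _ ≤ inducedMatchingNumber (deleteVerts G (closedNbhd G (x i))) + 1 :=
            Nat.add_le_add_right (card_le_im hMe) 1
        _ ≤ (Finset.univ.erase x0).sup
              (fun t => inducedMatchingNumber (deleteVerts G (closedNbhd G (x t))) + 1) :=
            Finset.le_sup (f := fun t => inducedMatchingNumber (deleteVerts G (closedNbhd G (x t))) + 1) (Finset.mem_erase.mpr ⟨hi0, Finset.mem_univ i⟩)
        _ ≤ _ := le_max_right _ _
    · -- no edge of M meets N[x0] : M lives in G \ N[x0]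
      push_neg at h
      have hM' : IsInducedMatching (deleteVerts G (closedNbhd G (x x0))) M :=
        indMatching_to_delete hM h
      exact le_trans (card_le_im hM') (le_max_left _ _)
  · -- ≥
    apply max_le
    · exact im_delete_le G _
    · apply Finset.sup_le
      intro t ht
      have ht0 : t ≠ x0 := (Finset.mem_erase.mp ht).1
      obtain ⟨M, hM, hc⟩ := im_spec (deleteVerts G (closedNbhd G (x t)))
      rw [← hc]
      have hadj0t : G.Adj (x x0) (x t) := by
        have hmem : x t ∈ closedNbhd G (x x0) := by
          rw [hN]; exact Finset.mem_image_of_mem x (Finset.mem_univ t)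
        rcases Finset.mem_insert.mp hmem with heq | hmem'
        · exact absurd (hx heq) ht0
        · exact (G.mem_neighborFinset _ _).mp hmem'
      have hsub : closedNbhd G (x x0) ⊆ closedNbhd G (x t) := by
        intro w hw
        by_cases hwt : w = x t
        · subst hwt; exact Finset.mem_insert_self _ _
        · apply Finset.mem_insert_of_mem
          rw [SimpleGraph.mem_neighborFinset]
          have hwS : w ∈ ((closedNbhd G (x x0) : Finset V) : Set V) := Finset.mem_coe.mpr hw
          have htS : x t ∈ ((closedNbhd G (x x0) : Finset V) : Set V) := by
            rw [hN]
            exact Finset.mem_coe.mpr (Finset.mem_image_of_mem x (Finset.mem_univ t))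
          exact hcl htS hwS (fun hh => hwt hh.symm)
      have heM : s(x x0, x t) ∉ M := by
        intro hmem
        exact delete_vert_not_mem (hM.1 _ hmem) (Sym2.mem_mk_left _ _)
          (hsub (Finset.mem_insert_self _ _))
      have hMG := indMatching_of_delete hM
      have cross : ∀ f ∈ M, ∀ u ∈ s(x x0, x t), ∀ v ∈ f, ¬ G.Adj u v := by
        intro f hf u hu v hv hadj
        have hvN : v ∉ closedNbhd G (x t) := delete_vert_not_mem (hM.1 f hf) hv
        apply hvN
        rcases Sym2.mem_iff.mp hu with rfl | rfl
        · exact hsub (Finset.mem_insert_of_mem ((G.mem_neighborFinset _ _).mpr hadj))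
        · exact Finset.mem_insert_of_mem ((G.mem_neighborFinset _ _).mpr hadj)
      have hnew : IsInducedMatching G (insert s(x x0, x t) M) := by
        constructor
        · intro f hf
          rcases Finset.mem_insert.mp hf with rfl | hfM
          · exact (SimpleGraph.mem_edgeSet G).mpr hadj0t
          · exact hMG.1 f hfM
        · intro f hf g hg hfg u v hu hv
          rcases Finset.mem_insert.mp hf with rfl | hfM
          · rcases Finset.mem_insert.mp hg with rfl | hgM
            · exact absurd rfl hfg
            · exact cross g hgM u hu v hv
          · rcases Finset.mem_insert.mp hg with rfl | hgM
            · intro hadj; exact cross f hfM v hv u hu hadj.symm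
            · exact hMG.2 f hfM g hgM hfg u v hu hv
      calc M.card + 1 = (insert s(x x0, x t) M).card :=
            (Finset.card_insert_of_notMem heM).symm
        _ ≤ inducedMatchingNumber G := card_le_im hnew
end

section
/- Let G be a chordal graph on n vertices. Then G is unmixed (all minimal vertex covers have the same cardinality) if and only if the vertex set of G is the disjoint union of those facets of the clique complex of G that admit a free vertex. -/
open Finset

variable {V : Type} [Fintype V] [DecidableEq V]

set_option linter.unusedSectionVars false
set_option linter.unusedVariables false
set_option maxHeartbeats 1600000
section Aux

open scoped Classical

variable {V : Type} [Fintype V] [DecidableEq V]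

/-- open neighborhood -/
noncomputable def nbr (G : SimpleGraph V) (v : V) : Finset V :=
  Finset.univ.filter (fun w => G.Adj v w)

/-- closed neighborhood -/
noncomputable def clN (G : SimpleGraph V) (v : V) : Finset V :=
  insert v (nbr G v)

lemma mem_nbr {G : SimpleGraph V} {v x : V} : x ∈ nbr G v ↔ G.Adj v x := by
  simp [nbr]

lemma mem_clN {G : SimpleGraph V} {v x : V} : x ∈ clN G v ↔ x = v ∨ G.Adj v x := by
  simp [clN, mem_nbr]

lemma self_mem_clN {G : SimpleGraph V} {v : V} : v ∈ clN G v := by simp [mem_clN]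

/-- a simplicial vertex: neighbors are pairwise adjacent -/
def Simp (G : SimpleGraph V) (v : V) : Prop :=
  ∀ ⦃x⦄, G.Adj v x → ∀ ⦃y⦄, G.Adj v y → x ≠ y → G.Adj x y

lemma clN_pairwise {G : SimpleGraph V} {v : V} (h : Simp G v) :
    ∀ x ∈ clN G v, ∀ y ∈ clN G v, x ≠ y → G.Adj x y := by
  intro x hx y hy hxy
  rcases mem_clN.mp hx with rfl | hx
  · rcases mem_clN.mp hy with rfl | hy
    · exact absurd rfl hxy
    · exact hy
  · rcases mem_clN.mp hy with rfl | hy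
    · exact hx.symm
    · exact h hx hy hxy

lemma clN_isClique {G : SimpleGraph V} {v : V} (h : Simp G v) :
    G.IsClique ↑(clN G v) := by
  intro x hx y hy hxy
  exact clN_pairwise h x (by simpa using hx) y (by simpa using hy) hxy

/-- every independent set extends to a maximal independent set -/
lemma exists_maxIndep_superset (G : SimpleGraph V) {I : Finset V} (hI : IsIndepSet G I) :
    ∃ M, IsMaxIndepSet G M ∧ I ⊆ M := by
  obtain ⟨M, hMmem, hMmax⟩ :=
    (Finset.univ.filter (fun M => IsIndepSet G M ∧ I ⊆ M)).exists_max_image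
      (fun M => M.card) ⟨I, by simp [hI]⟩
  simp only [Finset.mem_filter, Finset.mem_univ, true_and] at hMmem hMmax
  refine ⟨M, ⟨hMmem.1, ?_⟩, hMmem.2⟩
  intro T hT hMT
  exact Finset.eq_of_subset_of_card_le hMT (hMmax T ⟨hT, hMmem.2.trans hMT⟩)

lemma exists_maxCliqueF_superset (G : SimpleGraph V) {C : Finset V} (hC : G.IsClique ↑C) :
    ∃ F, IsMaxCliqueF G F ∧ C ⊆ F := by
  obtain ⟨F, hFmem, hFmax⟩ :=
    (Finset.univ.filter (fun F : Finset V => G.IsClique ↑F ∧ C ⊆ F)).exists_max_image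
      (fun F => F.card) ⟨C, by simp [hC]⟩
  simp only [Finset.mem_filter, Finset.mem_univ, true_and] at hFmem hFmax
  refine ⟨F, ⟨hFmem.1, ?_⟩, hFmem.2⟩
  intro F' hF' hFF'
  exact Finset.eq_of_subset_of_card_le hFF' (hFmax F' ⟨hF', hFmem.2.trans hFF'⟩)

lemma IsMaxIndepSet.mem_of_no_adj {G : SimpleGraph V} {M : Finset V}
    (hM : IsMaxIndepSet G M) {x : V} (h : ∀ y ∈ M, ¬ G.Adj x y) : x ∈ M := by
  have hind : IsIndepSet G (insert x M) := by
    intro u hu w hw hadj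
    rcases Finset.mem_insert.mp hu with rfl | huM
    · rcases Finset.mem_insert.mp hw with rfl | hwM
      · exact G.loopless.irrefl _ hadj
      · exact h w hwM hadj
    · rcases Finset.mem_insert.mp hw with rfl | hwM
      · exact h u huM hadj.symm
      · exact hM.1 huM hwM hadj
  have := hM.2 _ hind (Finset.subset_insert _ _)
  rw [this]; exact Finset.mem_insert_self _ _

/-- the indicator of a free-vertex facet, matching the theorem statement -/
def FreeFacet (G : SimpleGraph V) (F : Finset V) : Prop :=
  IsMaxCliqueF G F ∧ ∃ w ∈ F, ∀ F' : Finset V, IsMaxCliqueF G F' → w ∈ F' → F' = F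

lemma simp_clN_maxClique {G : SimpleGraph V} {s : V} (hs : Simp G s) :
    IsMaxCliqueF G (clN G s) := by
  refine ⟨clN_isClique hs, ?_⟩
  intro F' hF' hsub
  refine Finset.Subset.antisymm hsub ?_
  intro x hx
  rcases eq_or_ne x s with rfl | hxs
  · exact self_mem_clN
  · have : G.Adj s x := hF' (by simpa using hsub self_mem_clN) (by simpa using hx) (Ne.symm hxs)
    exact mem_clN.mpr (Or.inr this)

lemma simp_clN_free {G : SimpleGraph V} {s : V} (hs : Simp G s) :
    ∀ F' : Finset V, IsMaxCliqueF G F' → s ∈ F' → F' = clN G s := by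
  intro F' hF' hsF'
  have hsub : F' ⊆ clN G s := by
    intro x hx
    rcases eq_or_ne x s with rfl | hxs
    · exact self_mem_clN
    · exact mem_clN.mpr (Or.inr (hF'.1 (by simpa using hsF') (by simpa using hx) (Ne.symm hxs)))
  exact hF'.2 _ (clN_isClique hs) hsub

lemma simp_freeFacet {G : SimpleGraph V} {s : V} (hs : Simp G s) :
    FreeFacet G (clN G s) :=
  ⟨simp_clN_maxClique hs, s, self_mem_clN, simp_clN_free hs⟩

lemma freeFacet_eq_clN {G : SimpleGraph V} {F : Finset V} (hF : FreeFacet G F) :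
    ∃ w, Simp G w ∧ F = clN G w := by
  obtain ⟨hmax, w, hwF, hfree⟩ := hF
  have hsub : clN G w ⊆ F := by
    intro u hu
    rcases mem_clN.mp hu with rfl | hadj
    · exact hwF
    · -- {w, u} is a clique; extend to a maximal clique containing w, which equals F
      have hcl : G.IsClique ↑({w, u} : Finset V) := by
        intro x hx y hy hxy
        simp only [Finset.coe_insert, Set.mem_insert_iff, Finset.coe_singleton,
          Finset.mem_singleton] at hx hy
        rcases hx with rfl | hx <;> rcases hy with rfl | hy
        · exact absurd rfl hxy
        · simp at hy; subst hy; exact hadj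
        · simp at hx; subst hx; exact hadj.symm
        · simp at hx hy; subst hx; subst hy; exact absurd rfl hxy
      obtain ⟨F'', hF'', hsub''⟩ := exists_maxCliqueF_superset G hcl
      have : F'' = F := hfree F'' hF'' (hsub'' (by simp))
      subst this
      exact hsub'' (by simp)
  have hFsub : F ⊆ clN G w := by
    intro x hx
    rcases eq_or_ne x w with rfl | hxw
    · exact self_mem_clN
    · exact mem_clN.mpr (Or.inr (hmax.1 (by simpa using hwF) (by simpa using hx) (Ne.symm hxw)))
  have hFeq : F = clN G w := Finset.Subset.antisymm hFsub hsub
  refine ⟨w, ?_, hFeq⟩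
  intro x hx y hy hxy
  have hxF : x ∈ F := hFeq ▸ mem_clN.mpr (Or.inr hx)
  have hyF : y ∈ F := hFeq ▸ mem_clN.mpr (Or.inr hy)
  exact hmax.1 (by simpa using hxF) (by simpa using hyF) hxy

/-- two adjacent (or equal) simplicial vertices have the same closed neighborhood -/
lemma simp_adj_clN_eq {G : SimpleGraph V} {s t : V} (hs : Simp G s) (ht : Simp G t)
    (hadj : G.Adj s t) : clN G s = clN G t := by
  apply Finset.Subset.antisymm
  · intro x hx
    rcases mem_clN.mp hx with rfl | hx
    · exact mem_clN.mpr (Or.inr hadj.symm)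
    · rcases eq_or_ne x t with rfl | hxt
      · exact self_mem_clN
      · exact mem_clN.mpr (Or.inr (hs hx hadj (fun h => hxt h)).symm)
  · intro x hx
    rcases mem_clN.mp hx with rfl | hx
    · exact mem_clN.mpr (Or.inr hadj)
    · rcases eq_or_ne x s with rfl | hxs
      · exact self_mem_clN
      · exact mem_clN.mpr (Or.inr (ht hx hadj.symm (fun h => hxs h)).symm)

/-- well-covered: all maximal independent sets have the same size -/
def WC (G : SimpleGraph V) : Prop :=
  ∀ M N : Finset V, IsMaxIndepSet G M → IsMaxIndepSet G N → M.card = N.card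

/-- in a well-covered graph, distinct simplices are disjoint -/
lemma simplices_disjoint {G : SimpleGraph V} (hwc : WC G) {s t : V}
    (hs : Simp G s) (ht : Simp G t) (hne : clN G s ≠ clN G t) :
    ∀ v, v ∈ clN G s → v ∈ clN G t → False := by
  intro v hvs hvt
  have hst : ¬ G.Adj s t := fun h => hne (simp_adj_clN_eq hs ht h)
  have hsnet : s ≠ t := by rintro rfl; exact hne rfl
  have hvnes : v ≠ s := by
    rintro rfl
    rcases mem_clN.mp hvt with rfl | h
    · exact hsnet rfl
    · exact hst h.symm
  have hvnet : v ≠ t := by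
    rintro rfl
    rcases mem_clN.mp hvs with rfl | h
    · exact hsnet rfl
    · exact hst h
  -- take a maximal independent set containing v
  have hvind : IsIndepSet G {v} := by
    intro u hu w hw
    simp only [Finset.mem_singleton] at hu hw
    subst hu; subst hw; exact G.loopless.irrefl _
  obtain ⟨M, hM, hvM⟩ := exists_maxIndep_superset G hvind
  have hvM : v ∈ M := hvM (by simp)
  -- M ∩ clN s = {v}
  have hsM : s ∉ M := by
    intro hsM
    rcases mem_clN.mp hvs with h | h
    · exact hvnes h
    · exact hM.1 hsM hvM h
  have htM : t ∉ M := by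
    intro htM
    rcases mem_clN.mp hvt with h | h
    · exact hvnet h
    · exact hM.1 htM hvM h
  have hMclNs : ∀ y ∈ M, y ∈ clN G s → y = v := by
    intro y hyM hys
    by_contra hyv
    -- y and v are both in clique clN G s, distinct, hence adjacent; contra indep
    exact hM.1 hyM hvM (clN_pairwise hs y hys v hvs hyv)
  have hMclNt : ∀ y ∈ M, y ∈ clN G t → y = v := by
    intro y hyM hyt
    by_contra hyv
    exact hM.1 hyM hvM (clN_pairwise ht y hyt v hvt hyv)
  -- M' := (M \ {v}) ∪ {s, t} is independent and bigger
  set M' := insert s (insert t (M.erase v)) with hM'def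
  have hM'ind : IsIndepSet G M' := by
    intro u hu w hw hadj
    have key : ∀ z ∈ M.erase v, ¬ (G.Adj s z ∨ G.Adj t z) := by
      intro z hz h
      have hzM := Finset.mem_of_mem_erase hz
      have hzv := Finset.ne_of_mem_erase hz
      rcases h with h | h
      · exact hzv (hMclNs z hzM (mem_clN.mpr (Or.inr h)))
      · exact hzv (hMclNt z hzM (mem_clN.mpr (Or.inr h)))
    simp only [hM'def, Finset.mem_insert] at hu hw
    rcases hu with rfl | rfl | hu <;> rcases hw with rfl | rfl | hw
    · exact G.loopless.irrefl _ hadj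
    · exact hst hadj
    · exact key _ hw (Or.inl hadj)
    · exact hst hadj.symm
    · exact G.loopless.irrefl _ hadj
    · exact key _ hw (Or.inr hadj)
    · exact key _ hu (Or.inl hadj.symm)
    · exact key _ hu (Or.inr hadj.symm)
    · exact hM.1 (Finset.mem_of_mem_erase hu) (Finset.mem_of_mem_erase hw) hadj
  obtain ⟨M'', hM'', hsubM''⟩ := exists_maxIndep_superset G hM'ind
  have hcard : M'.card = M.card + 1 := by
    have h1 : (M.erase v).card = M.card - 1 := Finset.card_erase_of_mem hvM
    have hts : t ∉ M.erase v := fun h => htM (Finset.mem_of_mem_erase h)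
    have hss : s ∉ insert t (M.erase v) := by
      simp only [Finset.mem_insert]
      rintro (rfl | h)
      · exact hsnet rfl
      · exact hsM (Finset.mem_of_mem_erase h)
    rw [hM'def, Finset.card_insert_of_notMem hss, Finset.card_insert_of_notMem hts, h1]
    have : 1 ≤ M.card := Finset.card_pos.mpr ⟨v, hvM⟩
    omega
  have := hwc M M'' hM hM''
  have hle : M'.card ≤ M''.card := Finset.card_le_card hsubM''
  omega

lemma cover_iff_indep_compl {G : SimpleGraph V} {C : Finset V} :
    IsVertexCover G C ↔ IsIndepSet G Cᶜ := by
  constructor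
  · intro h u hu v hv hadj
    rcases h hadj with h' | h'
    · exact (Finset.mem_compl.mp hu) h'
    · exact (Finset.mem_compl.mp hv) h'
  · intro h u v hadj
    by_contra hc
    push_neg at hc
    exact h (Finset.mem_compl.mpr hc.1) (Finset.mem_compl.mpr hc.2) hadj

lemma minCover_iff_maxIndep_compl {G : SimpleGraph V} {C : Finset V} :
    IsMinVertexCover G C ↔ IsMaxIndepSet G Cᶜ := by
  constructor
  · rintro ⟨hc, hmin⟩
    refine ⟨cover_iff_indep_compl.mp hc, ?_⟩
    intro T hT hsub
    have hTc : IsVertexCover G Tᶜ := cover_iff_indep_compl.mpr (by simpa using hT)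
    have hTC : Tᶜ ⊆ C := by
      intro x hx
      by_contra hxC
      exact (Finset.mem_compl.mp hx) (hsub (Finset.mem_compl.mpr hxC))
    by_cases heq : Tᶜ = C
    · have : T = Cᶜ := by rw [← heq, compl_compl]
      exact this.symm
    · exact absurd hTc (hmin _ (Finset.ssubset_iff_subset_ne.mpr ⟨hTC, heq⟩))
  · rintro ⟨hind, hmax⟩
    refine ⟨cover_iff_indep_compl.mpr hind, ?_⟩
    intro D hD hDc
    have hDi : IsIndepSet G Dᶜ := cover_iff_indep_compl.mp hDc
    have hsub : Cᶜ ⊆ Dᶜ := by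
      intro x hx
      exact Finset.mem_compl.mpr (fun hxD => (Finset.mem_compl.mp hx) (hD.1 hxD))
    have hce := hmax Dᶜ hDi hsub
    have hCD : C = D := by
      have h2 := congrArg (·ᶜ) hce
      simpa using h2
    exact (Finset.ssubset_iff_subset_ne.mp (hCD ▸ hD)).2 rfl

lemma unmixed_iff_wc {G : SimpleGraph V} :
    (∀ C D : Finset V, IsMinVertexCover G C → IsMinVertexCover G D → C.card = D.card) ↔ WC G := by
  constructor
  · intro h M N hM hN
    have hMc : IsMinVertexCover G Mᶜ := minCover_iff_maxIndep_compl.mpr (by simpa using hM)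
    have hNc : IsMinVertexCover G Nᶜ := minCover_iff_maxIndep_compl.mpr (by simpa using hN)
    have hcc := h _ _ hMc hNc
    have h1 := Finset.card_add_card_compl M
    have h2 := Finset.card_add_card_compl N
    omega
  · intro h C D hC hD
    have h1 := h Cᶜ Dᶜ (minCover_iff_maxIndep_compl.mp hC) (minCover_iff_maxIndep_compl.mp hD)
    have h2 := Finset.card_add_card_compl C
    have h3 := Finset.card_add_card_compl D
    have h4 := Finset.card_add_card_compl Cᶜ
    have h5 := Finset.card_add_card_compl Dᶜ
    omega

lemma wc_of_partition (G : SimpleGraph V)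
    (h : ∀ v : V, ∃! F : Finset V, FreeFacet G F ∧ v ∈ F) : WC G := by
  suffices H : ∀ M, IsMaxIndepSet G M →
      M.card = (Finset.univ.filter (FreeFacet G) : Finset (Finset V)).card by
    intro M N hM hN; rw [H M hM, H N hN]
  intro M hM
  apply Finset.card_bij (fun (m : V) (_ : m ∈ M) => Classical.choose (h m))
  · intro m hm
    simp only [Finset.mem_filter, Finset.mem_univ, true_and]
    exact (Classical.choose_spec (h m)).1.1
  · intro m₁ hm₁ m₂ hm₂ heq
    by_contra hne
    have h1 := (Classical.choose_spec (h m₁)).1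
    have h2 := (Classical.choose_spec (h m₂)).1
    have hcl : G.IsClique ↑(Classical.choose (h m₁)) := h1.1.1.1
    have hm2' : m₂ ∈ Classical.choose (h m₁) := by rw [heq]; exact h2.2
    have hadj : G.Adj m₁ m₂ := hcl (by simpa using h1.2) (by simpa using hm2') hne
    exact hM.1 hm₁ hm₂ hadj
  · intro F hF
    simp only [Finset.mem_filter, Finset.mem_univ, true_and] at hF
    obtain ⟨w, hw, hFeq⟩ := freeFacet_eq_clN hF
    have hwex : ∃ m ∈ M, m ∈ F := by
      by_contra hc
      push_neg at hc
      have hwM : w ∈ M := by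
        apply hM.mem_of_no_adj
        intro y hy hadj
        exact hc y hy (hFeq ▸ mem_clN.mpr (Or.inr hadj))
      exact hc w hwM (hFeq ▸ self_mem_clN)
    obtain ⟨m, hmM, hmF⟩ := hwex
    refine ⟨m, hmM, ?_⟩
    exact ((Classical.choose_spec (h m)).2 F ⟨hF, hmF⟩).symm

lemma deleteVerts_adj {G : SimpleGraph V} {A : Finset V} {u v : V} :
    (deleteVerts G A).Adj u v ↔ G.Adj u v ∧ u ∉ A ∧ v ∉ A := Iff.rfl

lemma deleteVerts_chordal {G : SimpleGraph V} {A : Finset V} (h : IsChordal G) :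
    IsChordal (deleteVerts G A) := by
  intro n hn f hf hadj
  have hnotA : ∀ i : ZMod n, f i ∉ A := by
    intro i
    have := (hadj i (i+1)).mpr (Or.inl rfl)
    exact this.2.1
  apply h n hn f hf
  intro i j
  constructor
  · intro hGij
    exact (hadj i j).mp ⟨hGij, hnotA i, hnotA j⟩
  · intro hc
    exact ((hadj i j).mpr hc).1

lemma no_induced_C4 {G : SimpleGraph V} (hG : IsChordal G) {a b c d : V}
    (hab : G.Adj a b) (hbc : G.Adj b c) (hcd : G.Adj c d) (hda : G.Adj d a)
    (hac : ¬ G.Adj a c) (hbd : ¬ G.Adj b d) (hac' : a ≠ c) (hbd' : b ≠ d) : False := by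
  set f : ZMod 4 → V := fun i => if i.val = 0 then a else if i.val = 1 then b
    else if i.val = 2 then c else d with hf
  have h4 : ∀ i : ZMod 4, i = 0 ∨ i = 1 ∨ i = 2 ∨ i = 3 := by decide
  have e0 : f 0 = a := rfl
  have e1 : f 1 = b := rfl
  have e2 : f 2 = c := rfl
  have e3 : f 3 = d := rfl
  have hne : ∀ i j : ZMod 4, i ≠ j → f i ≠ f j := by
    have nab : a ≠ b := hab.ne
    have nbc : b ≠ c := hbc.ne
    have ncd : c ≠ d := hcd.ne
    have nda : d ≠ a := hda.ne
    intro i j hij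
    rcases h4 i with rfl | rfl | rfl | rfl <;> rcases h4 j with rfl | rfl | rfl | rfl <;>
      simp only [e0, e1, e2, e3] <;>
      first
        | exact absurd rfl hij
        | exact nab | exact nbc | exact ncd | exact nda
        | exact hac' | exact hbd'
        | exact nab.symm | exact nbc.symm | exact ncd.symm | exact nda.symm
        | exact hac'.symm | exact hbd'.symm
  have hinj : Function.Injective f := by
    intro i j h
    by_contra hij
    exact hne i j hij h
  have key : ∀ i j : ZMod 4, G.Adj (f i) (f j) ↔ j = i + 1 ∨ i = j + 1 := by
    intro i j
    rcases h4 i with rfl | rfl | rfl | rfl <;> rcases h4 j with rfl | rfl | rfl | rfl <;>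
      simp only [e0, e1, e2, e3] <;>
      first
        | exact iff_of_true hab (by decide)
        | exact iff_of_true hab.symm (by decide)
        | exact iff_of_true hbc (by decide)
        | exact iff_of_true hbc.symm (by decide)
        | exact iff_of_true hcd (by decide)
        | exact iff_of_true hcd.symm (by decide)
        | exact iff_of_true hda (by decide)
        | exact iff_of_true hda.symm (by decide)
        | exact iff_of_false (G.loopless.irrefl _) (by decide)
        | exact iff_of_false hac (by decide)
        | exact iff_of_false (fun hh => hac hh.symm) (by decide)
        | exact iff_of_false hbd (by decide)
        | exact iff_of_false (fun hh => hbd hh.symm) (by decide)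
  exact hG 4 (by norm_num) f hinj key

/-- Claim D: in a chordal graph, a clique all of whose vertices have outside
neighbors admits an independent dominating set from outside. -/
lemma claimD : ∀ (k : ℕ) (G : SimpleGraph V), IsChordal G → ∀ K : Finset V,
    K.card ≤ k →
    (∀ x ∈ K, ∀ y ∈ K, x ≠ y → G.Adj x y) →
    (∀ x ∈ K, ∃ z, G.Adj x z ∧ z ∉ K) →
    ∃ I : Finset V, IsIndepSet G I ∧ (∀ y ∈ I, y ∉ K ∧ ∃ x ∈ K, G.Adj y x) ∧
      (∀ x ∈ K, ∃ y ∈ I, G.Adj x y) := by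
  intro k
  induction k with
  | zero =>
    intro G _ K hK _ _
    have : K = ∅ := Finset.card_eq_zero.mp (Nat.le_zero.mp hK)
    subst this
    exact ⟨∅, fun u hu => by simp at hu, fun y hy => by simp at hy,
      fun x hx => by simp at hx⟩
  | succ k ih =>
    intro G hch K hK hclique hout
    rcases Finset.eq_empty_or_nonempty K with rfl | ⟨x₀, hx₀⟩
    · exact ⟨∅, fun u hu => by simp at hu, fun y hy => by simp at hy,
        fun x hx => by simp at hx⟩
    set Y := Finset.univ.filter (fun y => y ∉ K ∧ ∃ x ∈ K, G.Adj y x) with hYdef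
    have hYne : Y.Nonempty := by
      obtain ⟨z, hz1, hz2⟩ := hout x₀ hx₀
      refine ⟨z, ?_⟩
      simp only [hYdef, Finset.mem_filter, Finset.mem_univ, true_and]
      exact ⟨hz2, x₀, hx₀, hz1.symm⟩
    obtain ⟨y₀, hy₀Y, hy₀max⟩ := Y.exists_max_image (fun y => (nbr G y ∩ K).card) hYne
    simp only [hYdef, Finset.mem_filter, Finset.mem_univ, true_and] at hy₀Y
    obtain ⟨hy₀K, x₁, hx₁K, hy₀x₁⟩ := hy₀Y
    set K' := K \ nbr G y₀ with hK'def
    have hx₁nbr : x₁ ∈ nbr G y₀ := mem_nbr.mpr hy₀x₁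
    have hK'K : K' ⊆ K := Finset.sdiff_subset
    have hK'card : K'.card < K.card := by
      apply Finset.card_lt_card
      rw [Finset.ssubset_iff_subset_ne]
      refine ⟨hK'K, fun h => ?_⟩
      have : x₁ ∈ K' := h ▸ hx₁K
      exact (Finset.mem_sdiff.mp this).2 hx₁nbr
    -- key: outside witnesses of K' avoid the closed neighborhood of y₀
    have hzgood : ∀ x ∈ K', ∀ z, G.Adj x z → z ∉ K → z ∉ clN G y₀ := by
      intro x hx z hxz hzK hzcl
      obtain ⟨hxK, hxnbr⟩ := Finset.mem_sdiff.mp hx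
      rcases mem_clN.mp hzcl with rfl | hzy
      · exact hxnbr (mem_nbr.mpr hxz.symm)
      · -- z ∈ nbr y₀ : contradiction with maximality of y₀
        have hsub : nbr G y₀ ∩ K ⊆ nbr G z ∩ K := by
          intro w hw
          obtain ⟨hw1, hw2⟩ := Finset.mem_inter.mp hw
          refine Finset.mem_inter.mpr ⟨?_, hw2⟩
          rw [mem_nbr]
          by_contra hzw
          have hwx : G.Adj w x := hclique w hw2 x hxK
            (by rintro rfl; exact hxnbr hw1)
          exact no_induced_C4 hch (mem_nbr.mp hw1) hwx hxz hzy.symm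
            (fun h => hxnbr (mem_nbr.mpr h)) (fun h => hzw h.symm)
            (by rintro rfl; exact hy₀K hxK)
            (by rintro rfl; exact hzK hw2)
        have hstrict : (nbr G y₀ ∩ K).card < (nbr G z ∩ K).card := by
          apply Finset.card_lt_card
          rw [Finset.ssubset_iff_subset_ne]
          refine ⟨hsub, fun h => ?_⟩
          have hx' : x ∈ nbr G z ∩ K := Finset.mem_inter.mpr ⟨mem_nbr.mpr hxz.symm, hxK⟩
          rw [← h] at hx'
          exact hxnbr (Finset.mem_inter.mp hx').1
        have hzY : z ∈ Y := by
          simp only [hYdef, Finset.mem_filter, Finset.mem_univ, true_and]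
          exact ⟨hzK, x, hxK, hxz.symm⟩
        exact absurd (hy₀max z hzY) (not_le.mpr hstrict)
    -- recurse in G' := G - N[y₀]
    set G' := deleteVerts G (clN G y₀) with hG'def
    have hKcl : ∀ x ∈ K', x ∉ clN G y₀ := by
      intro x hx
      obtain ⟨hxK, hxnbr⟩ := Finset.mem_sdiff.mp hx
      rw [mem_clN]
      rintro (rfl | h)
      · exact hy₀K hxK
      · exact hxnbr (mem_nbr.mpr h)
    obtain ⟨I', hI'ind, hI'mem, hI'dom⟩ := ih G' (deleteVerts_chordal hch) K'
      (by omega)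
      (by
        intro x hx y hy hxy
        exact ⟨hclique x (hK'K hx) y (hK'K hy) hxy, hKcl x hx, hKcl y hy⟩)
      (by
        intro x hx
        obtain ⟨z, hxz, hzK⟩ := hout x (hK'K hx)
        have hzcl := hzgood x hx z hxz hzK
        exact ⟨z, ⟨hxz, hKcl x hx, hzcl⟩, fun h => hzK (hK'K h)⟩)
    have hI'cl : ∀ y ∈ I', y ∉ clN G y₀ ∧ y ∉ K := by
      intro y hy
      obtain ⟨hyK', x, hxK', hyx⟩ := hI'mem y hy
      have hycl : y ∉ clN G y₀ := hyx.2.1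
      refine ⟨hycl, fun hyK => ?_⟩
      have : y ∈ nbr G y₀ := by
        have : y ∉ K' := hyK'
        rw [hK'def, Finset.mem_sdiff] at this
        push_neg at this
        exact this hyK
      exact hycl (Finset.mem_insert_of_mem this)
    refine ⟨insert y₀ I', ?_, ?_, ?_⟩
    · intro u hu w hw hadj
      rcases Finset.mem_insert.mp hu with rfl | huI
      · rcases Finset.mem_insert.mp hw with rfl | hwI
        · exact G.loopless.irrefl _ hadj
        · exact (hI'cl w hwI).1 (mem_clN.mpr (Or.inr hadj))
      · rcases Finset.mem_insert.mp hw with rfl | hwI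
        · exact (hI'cl u huI).1 (mem_clN.mpr (Or.inr hadj.symm))
        · exact hI'ind huI hwI ⟨hadj, (hI'cl u huI).1, (hI'cl w hwI).1⟩
    · intro y hy
      rcases Finset.mem_insert.mp hy with rfl | hyI
      · exact ⟨hy₀K, x₁, hx₁K, hy₀x₁⟩
      · obtain ⟨hyK', x, hxK', hyx⟩ := hI'mem y hyI
        exact ⟨(hI'cl y hyI).2, x, hK'K hxK', hyx.1⟩
    · intro x hx
      by_cases hxnbr : x ∈ nbr G y₀
      · exact ⟨y₀, Finset.mem_insert_self _ _, (mem_nbr.mp hxnbr).symm⟩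
      · have hxK' : x ∈ K' := Finset.mem_sdiff.mpr ⟨hx, hxnbr⟩
        obtain ⟨y, hyI, hxy⟩ := hI'dom x hxK'
        exact ⟨y, Finset.mem_insert_of_mem hyI, hxy.1⟩


noncomputable def suppF (G : SimpleGraph V) : Finset V :=
  Finset.univ.filter (fun v => ∃ w, G.Adj v w)

noncomputable def simplicesF (G : SimpleGraph V) : Finset (Finset V) :=
  (Finset.univ.filter (fun s => Simp G s)).image (clN G)

noncomputable def BsetF (G : SimpleGraph V) : Finset V :=
  (simplicesF G).biUnion id

lemma mem_simplicesF {G : SimpleGraph V} {N : Finset V} :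
    N ∈ simplicesF G ↔ ∃ s, Simp G s ∧ clN G s = N := by
  simp [simplicesF]

lemma mem_BsetF {G : SimpleGraph V} {v : V} :
    v ∈ BsetF G ↔ ∃ s, Simp G s ∧ v ∈ clN G s := by
  simp only [BsetF, Finset.mem_biUnion, id]
  constructor
  · rintro ⟨N, hN, hvN⟩
    obtain ⟨s, hs, rfl⟩ := mem_simplicesF.mp hN
    exact ⟨s, hs, hvN⟩
  · rintro ⟨s, hs, hvs⟩
    exact ⟨clN G s, mem_simplicesF.mpr ⟨s, hs, rfl⟩, hvs⟩

/-- generic transversal of the fibers of `f` on `s` -/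
lemma exists_image_transversal {α β : Type} [DecidableEq α] [DecidableEq β]
    (s : Finset α) (f : α → β) :
    ∃ R : Finset α, R ⊆ s ∧ (∀ N ∈ s.image f, ∃ r ∈ R, f r = N) ∧
      (∀ r ∈ R, ∀ r' ∈ R, f r = f r' → r = r') ∧ R.card = (s.image f).card := by
  classical
  have pick : ∀ N : {x // x ∈ s.image f}, ∃ a, a ∈ s ∧ f a = N.1 := by
    intro N
    obtain ⟨a, ha, hfa⟩ := Finset.mem_image.mp N.2
    exact ⟨a, ha, hfa⟩
  refine ⟨(s.image f).attach.image (fun N => Classical.choose (pick N)), ?_, ?_, ?_, ?_⟩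
  · intro r hr
    obtain ⟨N, _, rfl⟩ := Finset.mem_image.mp hr
    exact (Classical.choose_spec (pick N)).1
  · intro N hN
    refine ⟨Classical.choose (pick ⟨N, hN⟩), ?_, (Classical.choose_spec (pick ⟨N, hN⟩)).2⟩
    exact Finset.mem_image.mpr ⟨⟨N, hN⟩, Finset.mem_attach _ _, rfl⟩
  · intro r hr r' hr' hff
    obtain ⟨N, _, rfl⟩ := Finset.mem_image.mp hr
    obtain ⟨N', _, rfl⟩ := Finset.mem_image.mp hr'
    have h1 := (Classical.choose_spec (pick N)).2
    have h2 := (Classical.choose_spec (pick N')).2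
    have : N = N' := Subtype.ext (by rw [← h1, ← h2]; exact hff)
    rw [this]
  · rw [Finset.card_image_of_injOn, Finset.card_attach]
    intro N _ N' _ hff
    have hff' : Classical.choose (pick N) = Classical.choose (pick N') := hff
    have h1 := (Classical.choose_spec (pick N)).2
    have h2 := (Classical.choose_spec (pick N')).2
    exact Subtype.ext (by rw [← h1, ← h2]; exact congrArg f hff')

/-- a transversal of the simplices by simplicial vertices -/
lemma exists_reps (G : SimpleGraph V) :
    ∃ R : Finset V, (∀ r ∈ R, Simp G r) ∧
      (∀ N ∈ simplicesF G, ∃ r ∈ R, clN G r = N) ∧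
      (∀ r ∈ R, ∀ r' ∈ R, clN G r = clN G r' → r = r') ∧
      R.card = (simplicesF G).card := by
  obtain ⟨R, hsub, hsur, hinj, hcard⟩ :=
    exists_image_transversal (Finset.univ.filter (fun s => Simp G s)) (clN G)
  exact ⟨R, fun r hr => (Finset.mem_filter.mp (hsub hr)).2, hsur, hinj, hcard⟩

lemma wc_deleteB (G : SimpleGraph V) (hwc : WC G) : WC (deleteVerts G (BsetF G)) := by
  obtain ⟨R, hRsimp, hRsur, hRinj, hRcard⟩ := exists_reps G
  have hRB : R ⊆ BsetF G := by
    intro r hr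
    exact mem_BsetF.mpr ⟨r, hRsimp r hr, self_mem_clN⟩
  have key : ∀ M' : Finset V, IsMaxIndepSet (deleteVerts G (BsetF G)) M' →
      IsMaxIndepSet G ((M' \ BsetF G) ∪ R) ∧
      ((M' \ BsetF G) ∪ R).card + (BsetF G).card = M'.card + R.card := by
    intro M' hM'
    have hBM' : BsetF G ⊆ M' := by
      intro x hx
      apply hM'.mem_of_no_adj
      intro y _ hadj
      exact hadj.2.1 hx
    have hdisj : Disjoint (M' \ BsetF G) R := by
      apply Finset.disjoint_left.mpr
      intro x hx hxR
      exact (Finset.mem_sdiff.mp hx).2 (hRB hxR)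
    constructor
    · constructor
      · -- independence
        intro u hu w hw hadj
        rcases Finset.mem_union.mp hu with huM | huR
        · rcases Finset.mem_union.mp hw with hwM | hwR
          · exact hM'.1 (Finset.mem_sdiff.mp huM).1 (Finset.mem_sdiff.mp hwM).1
              ⟨hadj, (Finset.mem_sdiff.mp huM).2, (Finset.mem_sdiff.mp hwM).2⟩
          · exact (Finset.mem_sdiff.mp huM).2
              (mem_BsetF.mpr ⟨w, hRsimp w hwR, mem_clN.mpr (Or.inr hadj.symm)⟩)
        · rcases Finset.mem_union.mp hw with hwM | hwR
          · exact (Finset.mem_sdiff.mp hwM).2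
              (mem_BsetF.mpr ⟨u, hRsimp u huR, mem_clN.mpr (Or.inr hadj)⟩)
          · have heq := hRinj u huR w hwR
              (simp_adj_clN_eq (hRsimp u huR) (hRsimp w hwR) hadj)
            rw [heq] at hadj
            exact G.loopless.irrefl _ hadj
      · -- maximality
        intro T hT hsubT
        refine Finset.Subset.antisymm hsubT ?_
        intro x hxT
        by_cases hxB : x ∈ BsetF G
        · obtain ⟨sx, hsx, hxsx⟩ := mem_BsetF.mp hxB
          obtain ⟨r, hrR, hrcl⟩ := hRsur (clN G sx) (mem_simplicesF.mpr ⟨sx, hsx, rfl⟩)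
          have hxr : x ∈ clN G r := hrcl ▸ hxsx
          rcases mem_clN.mp hxr with rfl | hadj
          · exact Finset.mem_union_right _ hrR
          · exact absurd hadj
              (hT (hsubT (Finset.mem_union_right _ hrR)) hxT)
        · have hxM' : x ∈ M' := by
            apply hM'.mem_of_no_adj
            intro y hyM' hadj
            by_cases hyB : y ∈ BsetF G
            · exact hadj.2.2 hyB
            · exact hT hxT (hsubT (Finset.mem_union_left _
                (Finset.mem_sdiff.mpr ⟨hyM', hyB⟩))) hadj.1
          exact Finset.mem_union_left _ (Finset.mem_sdiff.mpr ⟨hxM', hxB⟩)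
    · -- cardinality
      rw [Finset.card_union_of_disjoint hdisj]
      have := Finset.card_sdiff_add_card_eq_card hBM'
      omega
  intro M N hM hN
  obtain ⟨hM1, hM2⟩ := key M hM
  obtain ⟨hN1, hN2⟩ := key N hN
  have := hwc _ _ hM1 hN1
  omega

/-- From any `s`-`t` walk with interior in `C`, extract an induced (chordless, vertex-disjoint)
path with interior in `C`. -/
lemma exists_induced_path (G : SimpleGraph V) {s t : V} (C : Finset V) (hst : s ≠ t)
    (hex : ∃ (n : ℕ) (f : ℕ → V), f 0 = s ∧ f n = t ∧ (∀ i, i < n → G.Adj (f i) (f (i+1))) ∧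
      (∀ i, 0 < i → i < n → f i ∈ C)) :
    ∃ (n : ℕ) (f : ℕ → V), 0 < n ∧ f 0 = s ∧ f n = t ∧
      (∀ i, i < n → G.Adj (f i) (f (i+1))) ∧
      (∀ i, 0 < i → i < n → f i ∈ C) ∧
      (∀ i j, i < j → j ≤ n → f i ≠ f j) ∧
      (∀ i j, i + 1 < j → j ≤ n → ¬ G.Adj (f i) (f j)) := by
  classical
  set P : ℕ → Prop := fun n => ∃ f : ℕ → V, f 0 = s ∧ f n = t ∧
    (∀ i, i < n → G.Adj (f i) (f (i+1))) ∧ (∀ i, 0 < i → i < n → f i ∈ C) with hPdef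
  have hP : ∃ n, P n := hex
  set n := Nat.find hP with hndef
  obtain ⟨f, hf0, hfn, hfadj, hfC⟩ : P n := Nat.find_spec hP
  have hmin : ∀ m, m < n → ¬ P m := fun m hm => Nat.find_min hP hm
  have hn0 : 0 < n := by
    rcases Nat.eq_zero_or_pos n with h | h
    · exfalso; apply hst; rw [← hf0, ← hfn, h]
    · exact h
  have hnodup : ∀ i j, i < j → j ≤ n → f i ≠ f j := by
    intro i j hij hjn heq
    set g : ℕ → V := fun k => if k ≤ i then f k else f (k + (j - i)) with hgdef
    apply hmin (n - (j - i)) (by omega)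
    refine ⟨g, ?_, ?_, ?_, ?_⟩
    · simp [hgdef, hf0]
    · by_cases hmi : n - (j - i) ≤ i
      · have hj : j = n := by omega
        have hm : n - (j - i) = i := by omega
        rw [hm]
        simp only [hgdef, le_refl, if_pos]
        rw [heq, hj, hfn]
      · simp only [hgdef, if_neg hmi]
        have : n - (j - i) + (j - i) = n := by omega
        rw [this, hfn]
    · intro k hk
      by_cases h1 : k + 1 ≤ i
      · simp only [hgdef, if_pos (by omega : k ≤ i), if_pos h1]
        exact hfadj k (by omega)
      · by_cases h2 : k ≤ i
        · have hki : k = i := by omega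
          simp only [hgdef, if_pos h2, if_neg h1]
          subst hki
          have : k + 1 + (j - k) = j + 1 := by omega
          rw [this, heq]
          exact hfadj j (by omega)
        · simp only [hgdef, if_neg h2, if_neg (by omega : ¬ k + 1 ≤ i)]
          have : k + 1 + (j - i) = k + (j - i) + 1 := by omega
          rw [this]
          exact hfadj _ (by omega)
    · intro k hk0 hkm
      by_cases h2 : k ≤ i
      · simp only [hgdef, if_pos h2]
        exact hfC k hk0 (by omega)
      · simp only [hgdef, if_neg h2]
        exact hfC _ (by omega) (by omega)
  have hchord : ∀ i j, i + 1 < j → j ≤ n → ¬ G.Adj (f i) (f j) := by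
    intro i j hij hjn hadj
    set g : ℕ → V := fun k => if k ≤ i then f k else f (k + (j - i - 1)) with hgdef
    apply hmin (n - (j - i - 1)) (by omega)
    refine ⟨g, ?_, ?_, ?_, ?_⟩
    · simp [hgdef, hf0]
    · simp only [hgdef, if_neg (by omega : ¬ n - (j - i - 1) ≤ i)]
      have : n - (j - i - 1) + (j - i - 1) = n := by omega
      rw [this, hfn]
    · intro k hk
      by_cases h1 : k + 1 ≤ i
      · simp only [hgdef, if_pos (by omega : k ≤ i), if_pos h1]
        exact hfadj k (by omega)
      · by_cases h2 : k ≤ i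
        · have hki : k = i := by omega
          simp only [hgdef, if_pos h2, if_neg h1]
          subst hki
          have : k + 1 + (j - k - 1) = j := by omega
          rw [this]
          exact hadj
        · simp only [hgdef, if_neg h2, if_neg (by omega : ¬ k + 1 ≤ i)]
          have : k + 1 + (j - i - 1) = k + (j - i - 1) + 1 := by omega
          rw [this]
          exact hfadj _ (by omega)
    · intro k hk0 hkm
      by_cases h2 : k ≤ i
      · simp only [hgdef, if_pos h2]
        exact hfC k hk0 (by omega)
      · simp only [hgdef, if_neg h2]
        exact hfC _ (by omega) (by omega)
  exact ⟨n, f, hn0, hf0, hfn, hfadj, hfC, hnodup, hchord⟩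

lemma chordal_no_cycle (G : SimpleGraph V) (hch : IsChordal G) {s t : V}
    (hst : s ≠ t) (hadjst : ¬ G.Adj s t)
    (Ca Cb : Finset V) (hCab : ∀ x ∈ Ca, x ∉ Cb)
    (hcross : ∀ x ∈ Ca, ∀ y ∈ Cb, ¬ G.Adj x y)
    (hsCa : s ∉ Ca) (hsCb : s ∉ Cb) (htCa : t ∉ Ca) (htCb : t ∉ Cb)
    {p : ℕ} {fa : ℕ → V} (hp : 0 < p) (hfa0 : fa 0 = s) (hfap : fa p = t)
    (hfaadj : ∀ i, i < p → G.Adj (fa i) (fa (i+1)))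
    (hfaC : ∀ i, 0 < i → i < p → fa i ∈ Ca)
    (hfanodup : ∀ i j, i < j → j ≤ p → fa i ≠ fa j)
    (hfachord : ∀ i j, i + 1 < j → j ≤ p → ¬ G.Adj (fa i) (fa j))
    {q : ℕ} {fb : ℕ → V} (hq : 0 < q) (hfb0 : fb 0 = t) (hfbq : fb q = s)
    (hfbadj : ∀ i, i < q → G.Adj (fb i) (fb (i+1)))
    (hfbC : ∀ i, 0 < i → i < q → fb i ∈ Cb)
    (hfbnodup : ∀ i j, i < j → j ≤ q → fb i ≠ fb j)
    (hfbchord : ∀ i j, i + 1 < j → j ≤ q → ¬ G.Adj (fb i) (fb j)) : False := by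
  have hp2 : 2 ≤ p := by
    by_contra h
    have hp1 : p = 1 := by omega
    apply hadjst
    have := hfaadj 0 (by omega)
    rwa [hfa0, show (0+1) = p by omega, hfap] at this
  have hq2 : 2 ≤ q := by
    by_contra h
    have hq1 : q = 1 := by omega
    apply hadjst
    have := hfbadj 0 (by omega)
    rw [hfb0, show (0+1) = q by omega, hfbq] at this
    exact this.symm
  set n := p + q with hndef
  have hn4 : 4 ≤ n := by omega
  set F : ℕ → V := fun k => if k ≤ p then fa k else fb (k - p) with hFdef
  -- basic values
  have hF0 : F 0 = s := by simp [hFdef, hfa0]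
  have hFp : F p = t := by simp [hFdef, hfap]
  have hFb : ∀ k, p < k → F k = fb (k - p) := by
    intro k hk; simp [hFdef, Nat.not_le.mpr hk]
  have hFa : ∀ k, k ≤ p → F k = fa k := by
    intro k hk; simp [hFdef, hk]
  -- membership type of each vertex
  have hFmemA : ∀ k, 0 < k → k < p → F k ∈ Ca := by
    intro k h1 h2; rw [hFa k (by omega)]; exact hfaC k h1 h2
  have hFmemB : ∀ k, p < k → k < n → F k ∈ Cb := by
    intro k h1 h2; rw [hFb k h1]; exact hfbC (k - p) (by omega) (by omega)
  -- injectivity of F on [0, n)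
  have hFinj : ∀ a b, a < b → b < n → F a ≠ F b := by
    intro a b hab hbn heq
    by_cases hb : b ≤ p
    · exact hfanodup a b hab (by omega) (by rwa [hFa a (by omega), hFa b hb] at heq)
    · push_neg at hb
      by_cases ha : a ≤ p
      · -- F a ∈ {s, t} ∪ Ca, F b ∈ Cb
        have hbB : F b ∈ Cb := hFmemB b hb hbn
        rcases Nat.eq_zero_or_pos a with rfl | ha0
        · rw [hF0] at heq; exact hsCb (heq ▸ hbB)
        · rcases eq_or_lt_of_le ha with rfl | hap
          · rw [hFp] at heq; exact htCb (heq ▸ hbB)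
          · exact hCab _ (hFmemA a ha0 hap) (heq ▸ hbB)
      · push_neg at ha
        have : fb (a - p) = fb (b - p) := by
          rwa [hFb a ha, hFb b hb] at heq
        exact hfbnodup (a - p) (b - p) (by omega) (by omega) this
  -- adjacency characterization for a < b
  have hFadj : ∀ a b, a < b → b < n →
      (G.Adj (F a) (F b) ↔ (b = a + 1 ∨ (a = 0 ∧ b = n - 1))) := by
    intro a b hab hbn
    by_cases hb : b ≤ p
    · rw [hFa a (by omega), hFa b hb]
      constructor
      · intro h
        left
        by_contra hne
        exact hfachord a b (by omega) hb h
      · rintro (rfl | ⟨rfl, rfl⟩)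
        · exact hfaadj a (by omega)
        · omega
    · push_neg at hb
      by_cases ha : a ≤ p
      · rcases Nat.eq_zero_or_pos a with rfl | ha0
        · -- a = 0 : F a = s = fb q
          rw [hF0, hFb b hb]
          have hs' : s = fb q := hfbq.symm
          constructor
          · intro h
            right
            refine ⟨rfl, ?_⟩
            by_contra hne
            have hchord := hfbchord (b - p) q (by omega) le_rfl
            apply hchord
            rw [hfbq]
            exact h.symm
          · rintro (rfl | ⟨-, rfl⟩)
            · omega
            · have := hfbadj (q - 1) (by omega)
              rw [show q - 1 + 1 = q by omega, hfbq] at this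
              have hidx : n - 1 - p = q - 1 := by omega
              rw [hidx]
              exact this.symm
        · rcases eq_or_lt_of_le ha with rfl | hap
          · -- a = p : F a = t = fb 0
            rw [hFp, hFb b hb, ← hfb0]
            constructor
            · intro h
              left
              by_contra hne
              exact hfbchord 0 (b - a) (by omega) (by omega) h
            · rintro (rfl | ⟨rfl, -⟩)
              · have := hfbadj 0 (by omega)
                rw [show a + 1 - a = 0 + 1 by omega]
                exact this
              · omega
          · -- 0 < a < p : cross, never adjacent
            constructor
            · intro h
              exact absurd h (hcross _ (hFmemA a ha0 hap) _ (hFmemB b hb hbn))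
            · rintro (rfl | ⟨rfl, rfl⟩) <;> omega
      · push_neg at ha
        rw [hFb a ha, hFb b hb]
        constructor
        · intro h
          left
          by_contra hne
          exact hfbchord (a - p) (b - p) (by omega) (by omega) h
        · rintro (rfl | ⟨rfl, rfl⟩)
          · have := hfbadj (a - p) (by omega)
            rw [show a + 1 - p = a - p + 1 by omega]
            exact this
          · omega
  -- now build the ZMod cycle
  haveI : NeZero n := ⟨by omega⟩
  haveI : Fact (1 < n) := ⟨by omega⟩
  set f : ZMod n → V := fun i => F i.val with hfdef
  have hvlt : ∀ i : ZMod n, i.val < n := fun i => ZMod.val_lt i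
  have hinj : Function.Injective f := by
    intro i j h
    simp only [hfdef] at h
    have : i.val = j.val := by
      by_contra hne
      rcases Nat.lt_or_ge i.val j.val with hlt | hge
      · exact hFinj _ _ hlt (hvlt j) h
      · exact hFinj _ _ (by omega) (hvlt i) h.symm
    exact ZMod.val_injective n this
  have hsucc : ∀ i j : ZMod n, j = i + 1 ↔
      (j.val = i.val + 1 ∨ (i.val = n - 1 ∧ j.val = 0)) := by
    intro i j
    have h1 : (i + 1).val = (i.val + 1) % n := by
      rw [ZMod.val_add, ZMod.val_one]
    constructor
    · rintro rfl
      rw [h1]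
      have := hvlt i
      by_cases hc : i.val + 1 = n
      · right; rw [hc, Nat.mod_self]; omega
      · left; rw [Nat.mod_eq_of_lt (by omega)]
    · intro h
      have hj : j.val = (i + 1).val := by
        rw [h1]
        rcases h with h | ⟨h1', h2⟩
        · rw [Nat.mod_eq_of_lt (by have := hvlt j; omega)]; exact h
        · rw [h1', show n - 1 + 1 = n by omega, Nat.mod_self]; exact h2
      exact ZMod.val_injective n hj
  apply hch n hn4 f hinj
  intro i j
  simp only [hfdef]
  rw [hsucc i j, hsucc j i]
  set a := i.val with hadef
  set b := j.val with hbdef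
  have hva := hvlt i
  have hvb := hvlt j
  rcases Nat.lt_trichotomy a b with hab | hab | hab
  · rw [hFadj a b hab hvb]
    omega
  · rw [hab]
    constructor
    · intro h; exact absurd h (G.loopless.irrefl _)
    · intro h; exfalso; omega
  · rw [show G.Adj (F a) (F b) ↔ G.Adj (F b) (F a) from ⟨fun h => h.symm, fun h => h.symm⟩,
      hFadj b a hab hva]
    omega


lemma delete_walk_support {G : SimpleGraph V} {T : Finset V} :
    ∀ {u v : V} (p : (deleteVerts G T).Walk u v), u ∉ T → ∀ x ∈ p.support, x ∉ T := by
  intro u v p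
  induction p with
  | nil =>
    intro hu x hx
    rw [SimpleGraph.Walk.support_nil, List.mem_singleton] at hx
    rwa [hx]
  | cons h q ih =>
    intro hu x hx
    rw [SimpleGraph.Walk.support_cons] at hx
    rcases List.mem_cons.mp hx with rfl | hx
    · exact hu
    · exact ih h.2.2 x hx

noncomputable def walk_toDelete {G G' : SimpleGraph V} (hle : ∀ {a b : V}, G'.Adj a b → G.Adj a b)
    {S : Finset V} : ∀ {u v : V} (p : G'.Walk u v), (∀ x ∈ p.support, x ∉ S) →
    (deleteVerts G S).Walk u v := by
  intro u v p
  induction p with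
  | nil => intro _; exact SimpleGraph.Walk.nil
  | cons h q ih =>
    intro hs
    have h1 : ∀ x ∈ q.support, x ∉ S := by
      intro x hx
      apply hs
      rw [SimpleGraph.Walk.support_cons]
      exact List.mem_cons_of_mem _ hx
    refine SimpleGraph.Walk.cons ⟨hle h, ?_, ?_⟩ (ih h1)
    · exact hs _ (SimpleGraph.Walk.start_mem_support _)
    · apply hs
      rw [SimpleGraph.Walk.support_cons]
      exact List.mem_cons_of_mem _ q.start_mem_support

noncomputable def reachSet (H : SimpleGraph V) (a : V) : Finset V :=
  Finset.univ.filter (fun x => H.Reachable a x)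

lemma mem_reachSet {H : SimpleGraph V} {a x : V} :
    x ∈ reachSet H a ↔ H.Reachable a x := by simp [reachSet]

lemma walk_support_reach {H : SimpleGraph V} {a : V} :
    ∀ {u v : V} (p : H.Walk u v), H.Reachable a u → ∀ x ∈ p.support, H.Reachable a x := by
  intro u v p
  induction p with
  | nil =>
    intro h x hx
    rw [SimpleGraph.Walk.support_nil, List.mem_singleton] at hx
    rwa [hx]
  | cons hadj q ih =>
    intro h x hx
    rw [SimpleGraph.Walk.support_cons] at hx
    rcases List.mem_cons.mp hx with rfl | hx
    · exact h
    · exact ih (h.trans hadj.reachable) x hx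

lemma reachSet_not_mem {G : SimpleGraph V} {S : Finset V} {a x : V}
    (haS : a ∉ S) (hx : x ∈ reachSet (deleteVerts G S) a) : x ∉ S := by
  obtain ⟨w⟩ := mem_reachSet.mp hx
  exact delete_walk_support w haS x w.end_mem_support

lemma sep_nbr_aux {G : SimpleGraph V} {S : Finset V} {a c s : V}
    (haS : a ∉ S) (hsS : s ∈ S)
    (p : (deleteVerts G (S.erase s)).Walk a c) (hp : p.IsPath) (hs : s ∈ p.support) :
    ∃ x ∈ reachSet (deleteVerts G S) a, G.Adj s x := by
  have has : a ≠ s := fun h => haS (h ▸ hsS)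
  set q := p.takeUntil s hs with hqdef
  have hq : q.IsPath := hp.takeUntil hs
  have hqr : q.reverse.IsPath := hq.reverse
  rcases hrev : q.reverse with _ | ⟨hadj, r⟩
  · exact absurd rfl has
  · -- q.reverse = cons hadj r with hadj : Adj s x, r : Walk x a
    rename_i x
    have hnodup : q.reverse.support.Nodup := hqr.support_nodup
    rw [hrev, SimpleGraph.Walk.support_cons] at hnodup
    have hsr : s ∉ r.support := (List.nodup_cons.mp hnodup).1
    have hxS' : x ∉ S.erase s := hadj.2.2
    have hravoid : ∀ y ∈ r.support, y ∉ S := by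
      intro y hy
      have hyS' : y ∉ S.erase s := delete_walk_support r hxS' y hy
      have hys : y ≠ s := fun h => hsr (h ▸ hy)
      intro hyS
      exact hyS' (Finset.mem_erase.mpr ⟨hys, hyS⟩)
    have r' : (deleteVerts G S).Walk x a :=
      walk_toDelete (G' := deleteVerts G (S.erase s)) (fun h => h.1) r hravoid
    refine ⟨x, mem_reachSet.mpr ⟨r'.reverse⟩, hadj.1⟩


lemma getVert_mem_support' {G : SimpleGraph V} :
    ∀ {u v : V} (w : G.Walk u v) (i : ℕ), w.getVert i ∈ w.support := by
  intro u v w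
  induction w with
  | nil =>
    intro i
    rw [SimpleGraph.Walk.support_nil]
    exact List.mem_singleton.mpr rfl
  | cons h q ih =>
    intro i
    cases i with
    | zero =>
      rw [SimpleGraph.Walk.getVert_zero]
      exact SimpleGraph.Walk.start_mem_support _
    | succ m =>
      rw [SimpleGraph.Walk.getVert_cons_succ, SimpleGraph.Walk.support_cons]
      exact List.mem_cons_of_mem _ (ih m)

lemma reachSet_has_edge {H : SimpleGraph V} {c x : V}
    (hx : x ∈ reachSet H c) (hxc : x ≠ c) : ∃ y, H.Adj x y := by
  obtain ⟨w⟩ := mem_reachSet.mp hx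
  rcases hw : w.reverse with _ | ⟨h, r⟩
  · exact absurd rfl hxc
  · exact ⟨_, h⟩

lemma exists_clique_separator (G : SimpleGraph V) (hch : IsChordal G) {a b : V}
    (hab : a ≠ b) (hnadj : ¬ G.Adj a b) :
    ∃ S : Finset V, a ∉ S ∧ b ∉ S ∧ ¬ (deleteVerts G S).Reachable a b ∧
      (∀ s ∈ S, ∃ x ∈ reachSet (deleteVerts G S) a, G.Adj s x) ∧
      (∀ s ∈ S, ∃ y ∈ reachSet (deleteVerts G S) b, G.Adj s y) ∧
      (∀ x ∈ S, ∀ y ∈ S, x ≠ y → G.Adj x y) := by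
  classical
  have hS0 : a ∉ (Finset.univ \ {a, b}) ∧ b ∉ (Finset.univ \ {a, b}) ∧
      ¬ (deleteVerts G (Finset.univ \ {a, b})).Reachable a b := by
    refine ⟨by simp, by simp, ?_⟩
    rintro ⟨w⟩
    cases w with
    | nil => exact hab rfl
    | cons h q =>
      have hw' := h.2.2
      simp only [Finset.mem_sdiff, Finset.mem_univ, true_and, not_not,
        Finset.mem_insert, Finset.mem_singleton] at hw'
      rcases hw' with rfl | rfl
      · exact G.loopless.irrefl _ h.1
      · exact hnadj h.1
  set 𝒮 := Finset.univ.filter (fun S : Finset V =>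
    a ∉ S ∧ b ∉ S ∧ ¬ (deleteVerts G S).Reachable a b) with h𝒮def
  have h𝒮ne : 𝒮.Nonempty := ⟨Finset.univ \ {a, b}, by
    simp only [h𝒮def, Finset.mem_filter, Finset.mem_univ, true_and]; exact hS0⟩
  obtain ⟨S, hSmem, hSmin⟩ : ∃ S ∈ 𝒮, ∀ x ∈ 𝒮, ¬ x < S := by
    obtain ⟨S, hS⟩ := Finset.exists_minimal h𝒮ne
    exact ⟨S, hS.1, fun x hx hlt => hlt.not_ge (hS.2 hx hlt.le)⟩
  simp only [h𝒮def, Finset.mem_filter, Finset.mem_univ, true_and] at hSmem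
  obtain ⟨haS, hbS, hsep⟩ := hSmem
  have hnbr : ∀ s ∈ S, (∃ x ∈ reachSet (deleteVerts G S) a, G.Adj s x) ∧
      (∃ y ∈ reachSet (deleteVerts G S) b, G.Adj s y) := by
    intro s hsS
    have haS' : a ∉ S.erase s := fun h => haS (Finset.mem_of_mem_erase h)
    have hbS' : b ∉ S.erase s := fun h => hbS (Finset.mem_of_mem_erase h)
    have hreach : (deleteVerts G (S.erase s)).Reachable a b := by
      by_contra hr
      exact hSmin (S.erase s)
        (by simp only [h𝒮def, Finset.mem_filter, Finset.mem_univ, true_and];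
            exact ⟨haS', hbS', hr⟩)
        (Finset.erase_ssubset hsS)
    obtain ⟨w⟩ := hreach
    set p := w.bypass with hpdef
    have hp : p.IsPath := SimpleGraph.Walk.bypass_isPath w
    have hsp : s ∈ p.support := by
      by_contra hsp
      apply hsep
      have havoid : ∀ x ∈ p.support, x ∉ S := by
        intro x hx hxS
        have h1 : x ∉ S.erase s := delete_walk_support p haS' x hx
        exact h1 (Finset.mem_erase.mpr ⟨fun h => hsp (h ▸ hx), hxS⟩)
      exact ⟨walk_toDelete (G' := deleteVerts G (S.erase s)) (fun h => h.1) p havoid⟩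
    constructor
    · exact sep_nbr_aux haS hsS p hp hsp
    · exact sep_nbr_aux hbS hsS p.reverse hp.reverse
        (by rwa [SimpleGraph.Walk.support_reverse, List.mem_reverse])
  refine ⟨S, haS, hbS, hsep, fun s hs => (hnbr s hs).1, fun s hs => (hnbr s hs).2, ?_⟩
  intro s hsS t htS hst
  by_contra hnadjst
  set H := deleteVerts G S with hHdef
  set Ca := reachSet H a with hCadef
  set Cb := reachSet H b with hCbdef
  have hCaS : ∀ x ∈ Ca, x ∉ S := fun x hx => reachSet_not_mem haS hx
  have hCbS : ∀ x ∈ Cb, x ∉ S := fun x hx => reachSet_not_mem hbS hx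
  have hCab : ∀ x ∈ Ca, x ∉ Cb := by
    intro x hxa hxb
    exact hsep ((mem_reachSet.mp hxa).trans (mem_reachSet.mp hxb).symm)
  have hcross : ∀ x ∈ Ca, ∀ y ∈ Cb, ¬ G.Adj x y := by
    intro x hx y hy hadj
    have hH : H.Adj x y := ⟨hadj, hCaS x hx, hCbS y hy⟩
    exact hCab y (mem_reachSet.mpr ((mem_reachSet.mp hx).trans hH.reachable)) hy
  have hwitness : ∀ (c : V), c ∉ S →
      (∃ x ∈ reachSet H c, G.Adj s x) → (∃ x ∈ reachSet H c, G.Adj t x) →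
      ∃ (m : ℕ) (f : ℕ → V), f 0 = s ∧ f m = t ∧
        (∀ i, i < m → G.Adj (f i) (f (i+1))) ∧
        (∀ i, 0 < i → i < m → f i ∈ reachSet H c) := by
    rintro c hcS ⟨xs, hxs, hsxs⟩ ⟨xt, hxt, htxt⟩
    obtain ⟨w⟩ := (mem_reachSet.mp hxs).symm.trans (mem_reachSet.mp hxt)
    refine ⟨w.length + 2, fun k => if k = 0 then s
      else if k ≤ w.length + 1 then w.getVert (k-1) else t, by simp, ?_, ?_, ?_⟩
    · simp only [if_neg (by omega : ¬ (w.length + 2 = 0)),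
        if_neg (by omega : ¬ (w.length + 2 ≤ w.length + 1))]
    · intro i hi
      by_cases h0 : i = 0
      · subst h0
        simp only [if_pos rfl, if_neg (by omega : ¬ (0+1 = 0)),
          if_pos (by omega : 0+1 ≤ w.length + 1)]
        rw [show (0+1-1) = 0 by omega, SimpleGraph.Walk.getVert_zero]
        exact hsxs
      · by_cases hlast : i = w.length + 1
        · subst hlast
          simp only [if_neg h0, if_pos le_rfl,
            if_neg (by omega : ¬ (w.length + 1 + 1 = 0)),
            if_neg (by omega : ¬ (w.length + 1 + 1 ≤ w.length + 1))]
          rw [show w.length + 1 - 1 = w.length by omega, SimpleGraph.Walk.getVert_length]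
          exact htxt.symm
        · have h2 : i ≤ w.length := by omega
          simp only [if_neg h0, if_pos (by omega : i ≤ w.length + 1),
            if_neg (by omega : ¬ (i + 1 = 0)), if_pos (by omega : i + 1 ≤ w.length + 1)]
          have hadj := SimpleGraph.Walk.adj_getVert_succ w (by omega : i - 1 < w.length)
          rw [show i + 1 - 1 = i - 1 + 1 by omega]
          exact hadj.1
    · intro i h0 hi
      simp only [if_neg (by omega : ¬ i = 0), if_pos (by omega : i ≤ w.length + 1)]
      exact mem_reachSet.mpr (walk_support_reach w (mem_reachSet.mp hxs) _
        (getVert_mem_support' w (i-1)))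
  obtain ⟨m₁, fa, hfa0, hfam, hfaadj, hfaC⟩ :=
    hwitness a haS ((hnbr s hsS).1) ((hnbr t htS).1)
  obtain ⟨p, fa', hp, hfa'0, hfa'p, hfa'adj, hfa'C, hfa'nodup, hfa'chord⟩ :=
    exists_induced_path G Ca hst ⟨m₁, fa, hfa0, hfam, hfaadj, hfaC⟩
  -- from t to s through Cb
  have hwitness2 : ∃ (m : ℕ) (f : ℕ → V), f 0 = t ∧ f m = s ∧
      (∀ i, i < m → G.Adj (f i) (f (i+1))) ∧
      (∀ i, 0 < i → i < m → f i ∈ Cb) := by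
    obtain ⟨m₂, fb, hfb0, hfbm, hfbadj, hfbC⟩ :=
      hwitness b hbS ((hnbr s hsS).2) ((hnbr t htS).2)
    refine ⟨m₂, fun k => fb (m₂ - k), by simp [hfbm], by simp [hfb0], ?_, ?_⟩
    · intro i hi
      show G.Adj (fb (m₂ - i)) (fb (m₂ - (i + 1)))
      have h := (hfbadj (m₂ - i - 1) (by omega)).symm
      rw [show m₂ - i - 1 + 1 = m₂ - i by omega] at h
      rw [show m₂ - (i+1) = m₂ - i - 1 by omega]
      exact h
    · intro i h0 hi
      show fb (m₂ - i) ∈ Cb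
      exact hfbC (m₂ - i) (by omega) (by omega)
  obtain ⟨q, fb', hq, hfb'0, hfb'q, hfb'adj, hfb'C, hfb'nodup, hfb'chord⟩ :=
    exists_induced_path G Cb (Ne.symm hst) hwitness2
  exact chordal_no_cycle G hch hst hnadjst Ca Cb hCab hcross
    (fun h => hCaS s h hsS) (fun h => hCbS s h hsS)
    (fun h => hCaS t h htS) (fun h => hCbS t h htS)
    hp hfa'0 hfa'p hfa'adj hfa'C hfa'nodup hfa'chord
    hq hfb'0 hfb'q hfb'adj hfb'C hfb'nodup hfb'chord

lemma dirac_pair : ∀ (n : ℕ) (A : Finset V), A.card ≤ n → ∀ (G : SimpleGraph V), IsChordal G →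
    (∀ u w : V, G.Adj u w → u ∈ A) → ∀ (a b : V), a ∈ A → b ∈ A → a ≠ b → ¬ G.Adj a b →
    ∃ s t : V, s ∈ A ∧ t ∈ A ∧ s ≠ t ∧ ¬ G.Adj s t ∧ Simp G s ∧ Simp G t := by
  intro n
  induction n with
  | zero =>
    intro A hA G _ _ a b ha _ _ _
    rw [Finset.card_eq_zero.mp (Nat.le_zero.mp hA)] at ha
    simp at ha
  | succ n ih =>
    intro A hA G hch hsupp a b haA hbA hab hnadj
    obtain ⟨S, haS, hbS, hsep, hnbrA, hnbrB, hSclq⟩ := exists_clique_separator G hch hab hnadj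
    set H := deleteVerts G S with hHdef
    have hCmemA : ∀ (c : V), c ∈ A → ∀ x ∈ reachSet H c, x ∈ A := by
      intro c hcA x hx
      rcases eq_or_ne x c with rfl | hxc
      · exact hcA
      · obtain ⟨y, hy⟩ := reachSet_has_edge hx hxc
        exact hsupp x y hy.1
    -- generic one-side extraction
    have side : ∀ (c d : V), c ∈ A → c ∉ S → d ∈ A → d ∉ reachSet H c → d ∉ S →
        ∃ s₁, s₁ ∈ reachSet H c ∧ Simp G s₁ := by
      intro c d hcA hcS hdA hdC hdS
      set Cc := reachSet H c with hCc
      have hcC : c ∈ Cc := mem_reachSet.mpr (SimpleGraph.Reachable.refl c)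
      have hCcS : ∀ x ∈ Cc, x ∉ S := fun x hx => reachSet_not_mem hcS hx
      have hnbrsub : ∀ x ∈ Cc, ∀ z, G.Adj x z → z ∈ Cc ∪ S := by
        intro x hx z hadj
        by_cases hzS : z ∈ S
        · exact Finset.mem_union_right _ hzS
        · refine Finset.mem_union_left _ ?_
          have hH : H.Adj x z := ⟨hadj, hCcS x hx, hzS⟩
          exact mem_reachSet.mpr ((mem_reachSet.mp hx).trans hH.reachable)
      set A' := Cc ∪ S with hA'def
      have hA'sub : A' ⊆ A := by
        intro x hx
        rcases Finset.mem_union.mp hx with h | h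
        · exact hCmemA c hcA x h
        · obtain ⟨y, hy, hxy⟩ := hnbrA x h
          exact hsupp x y hxy
      have hdA' : d ∉ A' := by
        intro h
        rcases Finset.mem_union.mp h with h | h
        · exact hdC h
        · exact hdS h
      set G' := deleteVerts G (A'ᶜ) with hG'def
      have hG'adj : ∀ {x y : V}, x ∈ A' → y ∈ A' → G.Adj x y → G'.Adj x y := by
        intro x y hx hy hadj
        exact ⟨hadj, fun h => (Finset.mem_compl.mp h) hx, fun h => (Finset.mem_compl.mp h) hy⟩
      by_cases hclq : ∀ x ∈ A', ∀ y ∈ A', x ≠ y → G.Adj x y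
      · refine ⟨c, hcC, ?_⟩
        intro x hx y hy hxy
        exact hclq x (hnbrsub c hcC x hx) y (hnbrsub c hcC y hy) hxy
      · push_neg at hclq
        obtain ⟨x, hxA', y, hyA', hxy, hxynadj⟩ := hclq
        have hA'card : A'.card ≤ n := by
          have h1 : A' ⊆ A.erase d := by
            intro z hz
            exact Finset.mem_erase.mpr ⟨fun h => hdA' (h ▸ hz), hA'sub hz⟩
          have h2 := Finset.card_le_card h1
          have h3 := Finset.card_erase_of_mem hdA
          omega
        obtain ⟨s₁, t₁, hs₁A', ht₁A', hst₁, hnadj₁, hsimp₁, hsimp₂⟩ :=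
          ih A' hA'card G' (deleteVerts_chordal hch)
            (fun u w h => by
              have := h.2.1
              rw [Finset.mem_compl] at this
              exact not_not.mp this)
            x y hxA' hyA' hxy (fun h => hxynadj h.1)
        have hlift : ∀ z, z ∈ A' → z ∉ S → Simp G' z → (z ∈ Cc ∧ Simp G z) := by
          intro z hzA' hzS hzsimp
          have hzC : z ∈ Cc := by
            rcases Finset.mem_union.mp hzA' with h | h
            · exact h
            · exact absurd h hzS
          refine ⟨hzC, ?_⟩
          intro x' hx' y' hy' hne
          have hx'A' : x' ∈ A' := hnbrsub z hzC x' hx'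
          have hy'A' : y' ∈ A' := hnbrsub z hzC y' hy'
          exact (hzsimp (hG'adj hzA' hx'A' hx') (hG'adj hzA' hy'A' hy') hne).1
        have honeout : s₁ ∉ S ∨ t₁ ∉ S := by
          by_contra hcon
          push_neg at hcon
          exact hnadj₁ (hG'adj hs₁A' ht₁A' (hSclq s₁ hcon.1 t₁ hcon.2 hst₁))
        rcases honeout with h | h
        · obtain ⟨h1, h2⟩ := hlift s₁ hs₁A' h hsimp₁
          exact ⟨s₁, h1, h2⟩
        · obtain ⟨h1, h2⟩ := hlift t₁ ht₁A' h hsimp₂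
          exact ⟨t₁, h1, h2⟩
    have hbCa : b ∉ reachSet H a := by
      intro h
      exact hsep (mem_reachSet.mp h)
    have haCb : a ∉ reachSet H b := by
      intro h
      exact hsep (mem_reachSet.mp h).symm
    obtain ⟨s₁, hs₁Ca, hs₁simp⟩ := side a b haA haS hbA hbCa hbS
    obtain ⟨s₂, hs₂Cb, hs₂simp⟩ := side b a hbA hbS haA haCb haS
    have hCab : ∀ x ∈ reachSet H a, x ∉ reachSet H b := by
      intro x hxa hxb
      exact hsep ((mem_reachSet.mp hxa).trans (mem_reachSet.mp hxb).symm)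
    have hne : s₁ ≠ s₂ := fun h => hCab s₁ hs₁Ca (h ▸ hs₂Cb)
    have hnadj' : ¬ G.Adj s₁ s₂ := by
      intro hadj
      have hH : H.Adj s₁ s₂ := ⟨hadj, reachSet_not_mem haS hs₁Ca, reachSet_not_mem hbS hs₂Cb⟩
      exact hCab s₂ (mem_reachSet.mpr ((mem_reachSet.mp hs₁Ca).trans hH.reachable)) hs₂Cb
    exact ⟨s₁, s₂, hCmemA a haA s₁ hs₁Ca, hCmemA b hbA s₂ hs₂Cb, hne, hnadj', hs₁simp, hs₂simp⟩

lemma dirac_plus (G : SimpleGraph V) (hch : IsChordal G) {u w : V} (huw : G.Adj u w) :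
    ∃ s, Simp G s ∧ s ∈ suppF G := by
  have hsupp : ∀ x y : V, G.Adj x y → x ∈ suppF G := by
    intro x y h
    simp only [suppF, Finset.mem_filter, Finset.mem_univ, true_and]
    exact ⟨y, h⟩
  by_cases hclq : ∀ x ∈ suppF G, ∀ y ∈ suppF G, x ≠ y → G.Adj x y
  · refine ⟨u, ?_, hsupp u w huw⟩
    intro x hx y hy hxy
    exact hclq x (hsupp x u hx.symm) y (hsupp y u hy.symm) hxy
  · push_neg at hclq
    obtain ⟨x, hxA, y, hyA, hxy, hxynadj⟩ := hclq
    obtain ⟨s, t, hsA, _, _, _, hsimp, _⟩ :=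
      dirac_pair (suppF G).card (suppF G) le_rfl G hch hsupp x y hxA hyA hxy hxynadj
    exact ⟨s, hsimp, hsA⟩

lemma suppF_delete_lt (G : SimpleGraph V) (hch : IsChordal G) (hedge : ∃ u w, G.Adj u w) :
    (suppF (deleteVerts G (BsetF G))).card < (suppF G).card := by
  obtain ⟨u, w, huw⟩ := hedge
  obtain ⟨s, hs, hssupp⟩ := dirac_plus G hch huw
  have hsB : s ∈ BsetF G := mem_BsetF.mpr ⟨s, hs, self_mem_clN⟩
  have hsub : suppF (deleteVerts G (BsetF G)) ⊆ suppF G := by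
    intro x hx
    simp only [suppF, Finset.mem_filter, Finset.mem_univ, true_and] at hx ⊢
    obtain ⟨y, hy⟩ := hx
    exact ⟨y, hy.1⟩
  have hsnot : s ∉ suppF (deleteVerts G (BsetF G)) := by
    simp only [suppF, Finset.mem_filter, Finset.mem_univ, true_and]
    rintro ⟨y, hy⟩
    exact hy.2.1 hsB
  apply Finset.card_lt_card
  rw [Finset.ssubset_iff_subset_ne]
  exact ⟨hsub, fun h => hsnot (h ▸ hssupp)⟩

lemma cover_lemma : ∀ (n : ℕ) (G : SimpleGraph V), IsChordal G → WC G →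
    (suppF G).card ≤ n → ∀ v : V, ∃ s, Simp G s ∧ v ∈ clN G s := by
  intro n
  induction n with
  | zero =>
    intro G hch hwc hcard v
    have hsupp : suppF G = ∅ := Finset.card_eq_zero.mp (Nat.le_zero.mp hcard)
    refine ⟨v, ?_, self_mem_clN⟩
    intro x hx y hy hxy
    exfalso
    have : v ∈ suppF G := by
      simp only [suppF, Finset.mem_filter, Finset.mem_univ, true_and]
      exact ⟨x, hx⟩
    rw [hsupp] at this
    simp at this
  | succ n ih =>
    intro G hch hwc hcard v
    by_cases hvB : v ∈ BsetF G
    · exact mem_BsetF.mp hvB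
    · exfalso
      have hvsupp : ∃ w, G.Adj v w := by
        by_contra h
        push_neg at h
        exact hvB (mem_BsetF.mpr ⟨v, fun x hx => absurd hx (h x), self_mem_clN⟩)
      set G' := deleteVerts G (BsetF G) with hG'def
      have hch' : IsChordal G' := deleteVerts_chordal hch
      have hwc' : WC G' := wc_deleteB G hwc
      have hlt : (suppF G').card < (suppF G).card := by
        obtain ⟨w, hw⟩ := hvsupp
        exact suppF_delete_lt G hch ⟨v, w, hw⟩
      have hIH := ih G' hch' hwc' (by omega)
      -- real simplices of G'
      set KK := (Finset.univ.filter (fun t => Simp G' t ∧ t ∉ BsetF G)).image (clN G')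
        with hKKdef
      have hKU : ∀ K ∈ KK, ∀ x ∈ K, x ∉ BsetF G := by
        intro K hK x hx
        rw [hKKdef] at hK
        obtain ⟨t, ht, rfl⟩ := Finset.mem_image.mp hK
        simp only [Finset.mem_filter, Finset.mem_univ, true_and] at ht
        rcases mem_clN.mp hx with rfl | hadj
        · exact ht.2
        · exact hadj.2.2
      have hKclique : ∀ K ∈ KK, ∀ x ∈ K, ∀ y ∈ K, x ≠ y → G.Adj x y := by
        intro K hK x hx y hy hxy
        rw [hKKdef] at hK
        obtain ⟨t, ht, rfl⟩ := Finset.mem_image.mp hK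
        simp only [Finset.mem_filter, Finset.mem_univ, true_and] at ht
        exact (clN_pairwise (G := G') ht.1 x hx y hy hxy).1
      have hUcov : ∀ u : V, u ∉ BsetF G → ∃ K ∈ KK, u ∈ K := by
        intro u huB
        obtain ⟨t, ht, hut⟩ := hIH u
        have htB : t ∉ BsetF G := by
          intro htB
          have : clN G' t = {t} := by
            apply Finset.Subset.antisymm
            · intro x hx
              rcases mem_clN.mp hx with rfl | hadj
              · exact Finset.mem_singleton_self _
              · exact absurd htB hadj.2.1
            · intro x hx
              rw [Finset.mem_singleton] at hx
              exact hx ▸ self_mem_clN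
          rw [this, Finset.mem_singleton] at hut
          exact huB (hut ▸ htB)
        refine ⟨clN G' t, ?_, hut⟩
        rw [hKKdef]
        exact Finset.mem_image.mpr ⟨t, by simp [ht, htB], rfl⟩
      -- the bad simplex containing v
      obtain ⟨Kstar, hKstar, hvK⟩ := hUcov v hvB
      have houtside : ∀ x ∈ Kstar, ∃ z, G.Adj x z ∧ z ∉ Kstar := by
        intro x hx
        by_contra hcon
        push_neg at hcon
        have hxB : x ∈ BsetF G := by
          apply mem_BsetF.mpr ⟨x, ?_, self_mem_clN⟩
          intro a ha b hb hab
          exact hKclique Kstar hKstar a (hcon a ha) b (hcon b hb) hab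
        exact hKU Kstar hKstar x hx hxB
      obtain ⟨I, hIind, hImem, hIdom⟩ := claimD Kstar.card G hch Kstar le_rfl
        (hKclique Kstar hKstar) houtside
      obtain ⟨M, hM, hIM⟩ := exists_maxIndep_superset G hIind
      have hMK : ∀ x ∈ Kstar, x ∉ M := by
        intro x hx hxM
        obtain ⟨y, hyI, hxy⟩ := hIdom x hx
        exact hM.1 hxM (hIM hyI) hxy
      -- big maximal independent set
      obtain ⟨R, hRsimp, hRsur, hRinj, hRcard⟩ := exists_reps G
      obtain ⟨T, hTsub, hTsur, hTinj, hTcard⟩ :=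
        exists_image_transversal (Finset.univ.filter (fun t => Simp G' t ∧ t ∉ BsetF G))
          (clN G')
      have hTprop : ∀ t ∈ T, Simp G' t ∧ t ∉ BsetF G := by
        intro t ht
        have := hTsub ht
        simpa using this
      have hRB : ∀ r ∈ R, r ∈ BsetF G := fun r hr =>
        mem_BsetF.mpr ⟨r, hRsimp r hr, self_mem_clN⟩
      have hdisjRT : Disjoint R T := by
        apply Finset.disjoint_left.mpr
        intro x hxR hxT
        exact (hTprop x hxT).2 (hRB x hxR)
      have hMstar : IsMaxIndepSet G (R ∪ T) := by
        constructor
        · intro a ha b hb hadj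
          rcases Finset.mem_union.mp ha with haR | haT
          · rcases Finset.mem_union.mp hb with hbR | hbT
            · have heq := hRinj a haR b hbR
                (simp_adj_clN_eq (hRsimp a haR) (hRsimp b hbR) hadj)
              rw [heq] at hadj
              exact G.loopless.irrefl _ hadj
            · exact (hTprop b hbT).2
                (mem_BsetF.mpr ⟨a, hRsimp a haR, mem_clN.mpr (Or.inr hadj)⟩)
          · rcases Finset.mem_union.mp hb with hbR | hbT
            · exact (hTprop a haT).2
                (mem_BsetF.mpr ⟨b, hRsimp b hbR, mem_clN.mpr (Or.inr hadj.symm)⟩)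
            · have hadj' : G'.Adj a b := ⟨hadj, (hTprop a haT).2, (hTprop b hbT).2⟩
              have heq := hTinj a haT b hbT
                (simp_adj_clN_eq (G := G') (hTprop a haT).1 (hTprop b hbT).1 hadj')
              rw [heq] at hadj
              exact G.loopless.irrefl _ hadj
        · intro T' hT' hsubT'
          refine Finset.Subset.antisymm hsubT' ?_
          intro x hxT'
          by_cases hxB : x ∈ BsetF G
          · obtain ⟨sx, hsx, hxsx⟩ := mem_BsetF.mp hxB
            obtain ⟨r, hrR, hrcl⟩ := hRsur (clN G sx) (mem_simplicesF.mpr ⟨sx, hsx, rfl⟩)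
            have hxr : x ∈ clN G r := hrcl ▸ hxsx
            rcases mem_clN.mp hxr with rfl | hadj
            · exact Finset.mem_union_left _ hrR
            · exact absurd hadj (hT' (hsubT' (Finset.mem_union_left _ hrR)) hxT')
          · obtain ⟨K, hK, hxK⟩ := hUcov x hxB
            rw [hKKdef] at hK
            obtain ⟨t0, ht0, rfl⟩ := Finset.mem_image.mp hK
            obtain ⟨t, htT, htcl⟩ := hTsur (clN G' t0)
              (Finset.mem_image.mpr ⟨t0, ht0, rfl⟩)
            have hxt : x ∈ clN G' t := htcl ▸ hxK
            rcases mem_clN.mp hxt with rfl | hadj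
            · exact Finset.mem_union_right _ htT
            · exact absurd hadj.1 (hT' (hsubT' (Finset.mem_union_right _ htT)) hxT')
      -- cardinalities
      have hcard1 : (R ∪ T).card = R.card + T.card := Finset.card_union_of_disjoint hdisjRT
      have hMcount := hwc M (R ∪ T) hM hMstar
      -- bound |M ∩ B| ≤ |R|
      classical
      have hMBle : (M ∩ BsetF G).card ≤ R.card := by
        set g : V → V := fun x => if h : ∃ r, r ∈ R ∧ x ∈ clN G r then Classical.choose h
          else x with hgdef
        apply Finset.card_le_card_of_injOn g
        · intro x hx
          obtain ⟨hxM, hxB⟩ := Finset.mem_inter.mp hx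
          obtain ⟨sx, hsx, hxsx⟩ := mem_BsetF.mp hxB
          obtain ⟨r, hrR, hrcl⟩ := hRsur (clN G sx) (mem_simplicesF.mpr ⟨sx, hsx, rfl⟩)
          have hex : ∃ r, r ∈ R ∧ x ∈ clN G r := ⟨r, hrR, hrcl ▸ hxsx⟩
          rw [hgdef]
          simp only [hex, dif_pos]
          exact (Classical.choose_spec hex).1
        · intro x hx y hy hgxy
          obtain ⟨hxM, hxB⟩ := Finset.mem_inter.mp hx
          obtain ⟨hyM, hyB⟩ := Finset.mem_inter.mp hy
          have hexx : ∃ r, r ∈ R ∧ x ∈ clN G r := by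
            obtain ⟨sx, hsx, hxsx⟩ := mem_BsetF.mp hxB
            obtain ⟨r, hrR, hrcl⟩ := hRsur (clN G sx) (mem_simplicesF.mpr ⟨sx, hsx, rfl⟩)
            exact ⟨r, hrR, hrcl ▸ hxsx⟩
          have hexy : ∃ r, r ∈ R ∧ y ∈ clN G r := by
            obtain ⟨sy, hsy, hysy⟩ := mem_BsetF.mp hyB
            obtain ⟨r, hrR, hrcl⟩ := hRsur (clN G sy) (mem_simplicesF.mpr ⟨sy, hsy, rfl⟩)
            exact ⟨r, hrR, hrcl ▸ hysy⟩
          rw [hgdef] at hgxy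
          simp only [hexx, hexy, dif_pos] at hgxy
          have hxmem := (Classical.choose_spec hexx).2
          have hymem := (Classical.choose_spec hexy).2
          rw [hgxy] at hxmem
          by_contra hxy
          have hr := (Classical.choose_spec hexy).1
          exact hM.1 hxM hyM
            (clN_pairwise (hRsimp _ hr) x hxmem y hymem hxy)
      -- bound |M \ B| ≤ |KK| - 1
      have hKstarKK : Kstar ∈ KK := hKstar
      have hMUle : (M \ BsetF G).card ≤ KK.card - 1 := by
        have herase : (KK.erase Kstar).card = KK.card - 1 :=
          Finset.card_erase_of_mem hKstarKK
        rw [← herase]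
        set g : V → Finset V := fun x => if h : ∃ K, K ∈ KK ∧ x ∈ K then Classical.choose h
          else ∅ with hgdef
        apply Finset.card_le_card_of_injOn g
        · intro x hx
          obtain ⟨hxM, hxB⟩ := Finset.mem_sdiff.mp hx
          obtain ⟨K, hK, hxK⟩ := hUcov x hxB
          have hex : ∃ K, K ∈ KK ∧ x ∈ K := ⟨K, hK, hxK⟩
          rw [hgdef]
          simp only [hex, dif_pos]
          have h1 := (Classical.choose_spec hex).1
          have h2 := (Classical.choose_spec hex).2
          apply Finset.mem_erase.mpr
          refine ⟨?_, h1⟩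
          intro heq
          rw [heq] at h2
          exact hMK x h2 hxM
        · intro x hx y hy hgxy
          obtain ⟨hxM, hxB⟩ := Finset.mem_sdiff.mp hx
          obtain ⟨hyM, hyB⟩ := Finset.mem_sdiff.mp hy
          have hexx : ∃ K, K ∈ KK ∧ x ∈ K := by
            obtain ⟨K, hK, hxK⟩ := hUcov x hxB; exact ⟨K, hK, hxK⟩
          have hexy : ∃ K, K ∈ KK ∧ y ∈ K := by
            obtain ⟨K, hK, hyK⟩ := hUcov y hyB; exact ⟨K, hK, hyK⟩
          rw [hgdef] at hgxy
          simp only [hexx, hexy, dif_pos] at hgxy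
          have hxmem := (Classical.choose_spec hexx).2
          have hymem := (Classical.choose_spec hexy).2
          rw [hgxy] at hxmem
          by_contra hxy
          exact hM.1 hxM hyM
            (hKclique _ (Classical.choose_spec hexy).1 x hxmem y hymem hxy)
      have hKKpos : 1 ≤ KK.card := Finset.card_pos.mpr ⟨Kstar, hKstarKK⟩
      have hMsplit : (M ∩ BsetF G).card + (M \ BsetF G).card = M.card :=
        Finset.card_inter_add_card_sdiff M (BsetF G)
      have hTKK : T.card = KK.card := by rw [hKKdef]; exact hTcard
      omega


end Aux

/-- Herzog–Hibi–Zheng (combinatorial part): a chordal graph is unmixed iff its vertex set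
is the disjoint union of the facets of the clique complex admitting a free vertex. -/
theorem stmt_18 {V : Type} [Fintype V] [DecidableEq V] (G : SimpleGraph V)
    (hG : IsChordal G) :
    (∀ C D : Finset V, IsMinVertexCover G C → IsMinVertexCover G D → C.card = D.card) ↔
      (∀ v : V, ∃! F : Finset V,
        (IsMaxCliqueF G F ∧
            ∃ w ∈ F, ∀ F' : Finset V, IsMaxCliqueF G F' → w ∈ F' → F' = F) ∧
          v ∈ F) := by
  rw [unmixed_iff_wc]
  constructor
  · intro hwc v
    obtain ⟨s, hs, hvs⟩ := cover_lemma (suppF G).card G hG hwc le_rfl v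
    refine ⟨clN G s, ⟨⟨simp_clN_maxClique hs, s, self_mem_clN, simp_clN_free hs⟩, hvs⟩, ?_⟩
    rintro F ⟨hFF, hvF⟩
    obtain ⟨w, hw, rfl⟩ := freeFacet_eq_clN hFF
    by_contra hne
    exact simplices_disjoint hwc hw hs hne v hvF hvs
  · intro h
    exact wc_of_partition G h
end
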